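/- arXiv:2003.02915 — 5 statements merged into one kernel-verified Lean document; each statement's English description precedes it below -/
import Mathlib

section
/- For k ≥ 2, the number of set partitions of [n] with exactly k blocks avoiding the pattern 13/2 equals the binomial coefficient C(n-1, k-1). -/
open Finset Polynomial

/-- Set partitions of `[n] = {1, …, n}`, modeled as finpartitions of `Fin n`. -/
abbrev SP (n : ℕ) := Finpartition (Finset.univ : Finset (Fin n))

noncomputable instance (n : ℕ) : Fintype (SP n) :=
  Fintype.ofInjective Finpartition.parts fun _ _ h => Finpartition.ext h

/-- `i` and `j` lie in the same block of the set partition `P`. -/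
def inSameBlock {n : ℕ} (P : SP n) (i j : Fin n) : Prop :=
  ∃ B ∈ P.parts, i ∈ B ∧ j ∈ B

/-- `P` avoids the pattern `1/2/3`: no three elements lie in three pairwise distinct blocks. -/
def avoids1_2_3 {n : ℕ} (P : SP n) : Prop :=
  ¬ ∃ a b c : Fin n, a < b ∧ b < c ∧
    ¬ inSameBlock P a b ∧ ¬ inSameBlock P b c ∧ ¬ inSameBlock P a c

/-- `P` avoids the pattern `13/2`. -/
def avoids13_2 {n : ℕ} (P : SP n) : Prop :=
  ¬ ∃ a b c : Fin n, a < b ∧ b < c ∧ inSameBlock P a c ∧ ¬ inSameBlock P a b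

/-- `P` avoids the pattern `1/23`. -/
def avoids1_23 {n : ℕ} (P : SP n) : Prop :=
  ¬ ∃ a b c : Fin n, a < b ∧ b < c ∧ inSameBlock P b c ∧ ¬ inSameBlock P a b

/-- `P` avoids the pattern `12/3`. -/
def avoids12_3 {n : ℕ} (P : SP n) : Prop :=
  ¬ ∃ a b c : Fin n, a < b ∧ b < c ∧ inSameBlock P a b ∧ ¬ inSameBlock P a c

/-- `P` avoids the pattern `123`: every block has at most two elements. -/
def avoids123 {n : ℕ} (P : SP n) : Prop :=
  ∀ B ∈ P.parts, B.card ≤ 2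

/-- The block of `P` containing `i`. -/
def blockOf {n : ℕ} (P : SP n) (i : Fin n) : Finset (Fin n) :=
  (P.parts.filter (fun B => i ∈ B)).sup id

/-- The restricted growth function of `P`: the letter at position `i` is the index
(starting from 1) of the block containing `i`, blocks being ordered by increasing minima. -/
def rgf {n : ℕ} (P : SP n) (i : Fin n) : ℕ :=
  (P.parts.filter (fun B => B.min ≤ (blockOf P i).min)).card

/-- The left-bigger statistic of Wachs and White. -/
def lbStat {n : ℕ} (w : Fin n → ℕ) : ℕ :=
  ∑ j : Fin n, (((Finset.univ.filter (fun i => i < j)).image w).filter (fun v => w j < v)).card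

/-- The left-smaller statistic of Wachs and White. -/
def lsStat {n : ℕ} (w : Fin n → ℕ) : ℕ :=
  ∑ j : Fin n, (((Finset.univ.filter (fun i => i < j)).image w).filter (fun v => v < w j)).card

/-- The right-bigger statistic of Wachs and White. -/
def rbStat {n : ℕ} (w : Fin n → ℕ) : ℕ :=
  ∑ j : Fin n, (((Finset.univ.filter (fun i => j < i)).image w).filter (fun v => w j < v)).card

/-- The right-smaller statistic of Wachs and White. -/
def rsStat {n : ℕ} (w : Fin n → ℕ) : ℕ :=
  ∑ j : Fin n, (((Finset.univ.filter (fun i => j < i)).image w).filter (fun v => v < w j)).card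

open Classical in
/-- The generating function `∑ q^{stat(π)}` over `k`-block partitions of `[n]` avoiding
a given family of patterns (described by the avoidance predicate `avoid`). -/
noncomputable def genPoly (n k : ℕ) (avoid : SP n → Prop) (stat : (Fin n → ℕ) → ℕ) :
    Polynomial ℕ :=
  ∑ P ∈ Finset.univ.filter (fun P : SP n => P.parts.card = k ∧ avoid P),
    Polynomial.X ^ (stat (rgf P))

/-! ### Auxiliary machinery for `stmt2` -/

section Aux
variable {n : ℕ}

/-- predecessor in `Fin n` (truncated at 0). -/
def pr (i : Fin n) : Fin n := ⟨i.val - 1, lt_of_le_of_lt (Nat.sub_le _ _) i.isLt⟩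

open Classical in
/-- the set of positions where a new block starts (other than position 0). -/
noncomputable def cutSet (P : SP n) : Finset (Fin n) :=
  Finset.univ.filter (fun i => i.val ≠ 0 ∧ P.part (pr i) ≠ P.part i)

lemma mem_cutSet {P : SP n} {i : Fin n} :
    i ∈ cutSet P ↔ i.val ≠ 0 ∧ P.part (pr i) ≠ P.part i := by
  classical
  simp [cutSet]

lemma inSameBlock_iff_part_eq {P : SP n} {i j : Fin n} :
    inSameBlock P i j ↔ P.part i = P.part j := by
  constructor
  · rintro ⟨B, hB, hi, hj⟩
    rw [P.part_eq_of_mem hB hi, P.part_eq_of_mem hB hj]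
  · intro h
    exact ⟨P.part i, P.part_mem.2 (mem_univ i), P.mem_part (mem_univ i),
      h ▸ P.mem_part (mem_univ j)⟩

lemma part_interval {P : SP n} (hP : avoids13_2 P) {i t j : Fin n}
    (hit : i ≤ t) (htj : t ≤ j) (hij : P.part i = P.part j) : P.part i = P.part t := by
  rcases eq_or_lt_of_le hit with rfl | hit'
  · rfl
  rcases eq_or_lt_of_le htj with rfl | htj'
  · exact hij
  by_contra h
  exact hP ⟨i, t, j, hit', htj', inSameBlock_iff_part_eq.2 hij,
    fun hs => h (inSameBlock_iff_part_eq.1 hs)⟩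

lemma part_eq_of_no_cut {P : SP n} : ∀ (m : ℕ) (i j : Fin n), i ≤ j → j.val - i.val = m →
    (∀ t, i < t → t ≤ j → t ∉ cutSet P) → P.part i = P.part j := by
  intro m
  induction m with
  | zero =>
    intro i j hij hm _
    have : i = j := Fin.ext (by have := Fin.le_def.1 hij; omega)
    rw [this]
  | succ m ih =>
    intro i j hij hm hcut
    have hij' : i.val < j.val := by omega
    have hj0 : j.val ≠ 0 := by omega
    have h1 : i ≤ pr j := Fin.le_def.2 (by simp only [pr]; omega)
    have h2 : pr j ≤ j := Fin.le_def.2 (by simp only [pr]; omega)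
    have ihp : P.part i = P.part (pr j) := by
      refine ih i (pr j) h1 (by simp only [pr]; omega) (fun t ht1 ht2 => hcut t ht1 (le_trans ht2 h2))
    have hjc := hcut j (Fin.lt_def.2 hij') le_rfl
    rw [mem_cutSet] at hjc
    push_neg at hjc
    rw [ihp, hjc hj0]

lemma part_eq_iff_no_cut {P : SP n} (hP : avoids13_2 P) {i j : Fin n} (hij : i ≤ j) :
    P.part i = P.part j ↔ ∀ t, i < t → t ≤ j → t ∉ cutSet P := by
  constructor
  · intro h t hit htj hc
    rw [mem_cutSet] at hc
    obtain ⟨h0, hne⟩ := hc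
    have hit' : i ≤ pr t := Fin.le_def.2 (by simp [pr]; have := Fin.lt_def.1 hit; omega)
    have htt : pr t ≤ t := Fin.le_def.2 (by simp only [pr]; omega)
    have e1 : P.part i = P.part (pr t) := part_interval hP hit' (le_trans htt htj) h
    have e2 : P.part i = P.part t := part_interval hP (le_of_lt hit) htj h
    exact hne (e1 ▸ e2)
  · exact part_eq_of_no_cut (j.val - i.val) i j hij rfl

lemma parts_eq_image_part (P : SP n) : P.parts = Finset.univ.image P.part := by
  ext B
  simp only [mem_image, mem_univ, true_and]
  constructor
  · intro hB
    obtain ⟨a, ha⟩ := P.nonempty_of_mem_parts hB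
    exact ⟨a, P.part_eq_of_mem hB ha⟩
  · rintro ⟨a, rfl⟩
    exact P.part_mem.2 (mem_univ a)

lemma eq_of_part_iff {P Q : SP n} (h : ∀ i j, P.part i = P.part j ↔ Q.part i = Q.part j) :
    P = Q := by
  have hpart : ∀ i, P.part i = Q.part i := by
    intro i
    ext j
    rw [P.mem_part_iff_part_eq_part (mem_univ j) (mem_univ i),
      Q.mem_part_iff_part_eq_part (mem_univ j) (mem_univ i)]
    exact h j i
  apply Finpartition.ext
  rw [parts_eq_image_part P, parts_eq_image_part Q]
  exact Finset.image_congr (fun x _ => hpart x)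

end Aux

section Aux2
variable {n : ℕ}

lemma cutSet_card {P : SP n} (hP : avoids13_2 P) (hn : 0 < n) :
    P.parts.card = (cutSet P).card + 1 := by
  classical
  set z : Fin n := ⟨0, hn⟩ with hz
  have hz0 : z ∉ cutSet P := by
    rw [mem_cutSet]
    simp [hz]
  have hcard : (insert z (cutSet P)).card = P.parts.card := by
    refine Finset.card_bij (fun t _ => P.part t) (fun t _ => P.part_mem.2 (mem_univ t)) ?_ ?_
    · intro t ht t' ht' hpe
      rcases lt_trichotomy t t' with hlt | heq | hlt
      · exfalso
        have ht'' : t' ∈ cutSet P := by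
          rcases Finset.mem_insert.1 ht' with rfl | h
          · exact absurd (Fin.lt_def.1 hlt) (by simp [hz])
          · exact h
        rw [mem_cutSet] at ht''
        obtain ⟨h0, hne⟩ := ht''
        have h1 : t ≤ pr t' := Fin.le_def.2 (by simp only [pr]; have := Fin.lt_def.1 hlt; omega)
        have h2 : pr t' ≤ t' := Fin.le_def.2 (by simp only [pr]; omega)
        exact hne (((part_interval hP h1 h2 hpe).symm.trans hpe))
      · exact heq
      · exfalso
        have ht'' : t ∈ cutSet P := by
          rcases Finset.mem_insert.1 ht with rfl | h
          · exact absurd (Fin.lt_def.1 hlt) (by simp [hz])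
          · exact h
        rw [mem_cutSet] at ht''
        obtain ⟨h0, hne⟩ := ht''
        have h1 : t' ≤ pr t := Fin.le_def.2 (by simp only [pr]; have := Fin.lt_def.1 hlt; omega)
        have h2 : pr t ≤ t := Fin.le_def.2 (by simp only [pr]; omega)
        exact hne (((part_interval hP h1 h2 hpe.symm).symm.trans hpe.symm))
    · intro B hB
      obtain ⟨a, ha⟩ := P.nonempty_of_mem_parts hB
      have hs0 : (Finset.univ.filter (fun x => P.part x = B)).Nonempty :=
        ⟨a, by simp [P.part_eq_of_mem hB ha]⟩
      set t := (Finset.univ.filter (fun x => P.part x = B)).min' hs0 with htdef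
      have htm := (Finset.univ.filter (fun x => P.part x = B)).min'_mem hs0
      rw [Finset.mem_filter] at htm
      refine ⟨t, ?_, htm.2⟩
      by_cases h0 : t.val = 0
      · have : t = z := Fin.ext h0
        rw [this]; exact Finset.mem_insert_self _ _
      · refine Finset.mem_insert_of_mem ?_
        rw [mem_cutSet]
        refine ⟨h0, fun heq => ?_⟩
        have hmem : pr t ∈ Finset.univ.filter (fun x => P.part x = B) := by
          simp only [Finset.mem_filter, mem_univ, true_and]
          rw [heq]; exact htm.2
        have := Finset.min'_le _ _ hmem
        rw [← htdef] at this
        have := Fin.le_def.1 this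
        simp only [pr] at this
        omega
  rw [Finset.card_insert_of_notMem hz0] at hcard
  omega

/-- the RGF-like counting function of a cut set. -/
def gfun (S : Finset (Fin n)) (i : Fin n) : ℕ := (S.filter (fun t => t ≤ i)).card

/-- the setoid associated to a cut set. -/
def cutSetoid (S : Finset (Fin n)) : Setoid (Fin n) :=
  ⟨fun a b => gfun S a = gfun S b, ⟨fun _ => rfl, Eq.symm, Eq.trans⟩⟩

instance (S : Finset (Fin n)) : DecidableRel (cutSetoid S).r := fun _ _ => Nat.decEq _ _

/-- the layered partition associated to a cut set. -/
def layered (S : Finset (Fin n)) : SP n := Finpartition.ofSetoid (cutSetoid S)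

lemma layered_part_eq_iff {S : Finset (Fin n)} {i j : Fin n} :
    (layered S).part i = (layered S).part j ↔ gfun S i = gfun S j := by
  constructor
  · intro h
    have hj : j ∈ (layered S).part i := by
      rw [Finpartition.mem_part_iff_part_eq_part (P := layered S) (a := j) (b := i)
        (mem_univ j) (mem_univ i)]
      exact h.symm
    exact (Finpartition.mem_part_ofSetoid_iff_rel (s := cutSetoid S) (a := i) (b := j)).1 hj
  · intro h
    rw [← Finpartition.mem_part_iff_part_eq_part (P := layered S) (a := i) (b := j)
      (mem_univ i) (mem_univ j)]
    exact (Finpartition.mem_part_ofSetoid_iff_rel (s := cutSetoid S) (a := j) (b := i)).2 h.symm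

lemma gfun_mono {S : Finset (Fin n)} {i j : Fin n} (hij : i ≤ j) : gfun S i ≤ gfun S j := by
  refine Finset.card_le_card (fun t ht => ?_)
  simp only [Finset.mem_filter] at *
  exact ⟨ht.1, le_trans ht.2 hij⟩

end Aux2

section Aux3
variable {n : ℕ}

lemma layered_avoids (S : Finset (Fin n)) : avoids13_2 (layered S) := by
  rintro ⟨a, b, c, hab, hbc, hac, hnab⟩
  rw [inSameBlock_iff_part_eq, layered_part_eq_iff] at hac
  apply hnab
  rw [inSameBlock_iff_part_eq, layered_part_eq_iff]
  have h1 := gfun_mono (S := S) (le_of_lt hab)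
  have h2 := gfun_mono (S := S) (le_of_lt hbc)
  omega

lemma cutSet_layered {S : Finset (Fin n)} (hS0 : ∀ i ∈ S, i.val ≠ 0) :
    cutSet (layered S) = S := by
  ext i
  rw [mem_cutSet]
  constructor
  · rintro ⟨h0, hne⟩
    by_contra hiS
    apply hne
    rw [layered_part_eq_iff]
    unfold gfun
    congr 1
    ext t
    simp only [Finset.mem_filter, and_congr_right_iff]
    intro ht
    constructor
    · intro h
      exact le_trans h (Fin.le_def.2 (by simp only [pr]; omega))
    · intro h
      have hti : t ≠ i := fun h => hiS (h ▸ ht)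
      have := Fin.le_def.1 h
      refine Fin.le_def.2 ?_
      simp only [pr]
      have : t.val ≠ i.val := fun h => hti (Fin.ext h)
      omega
  · intro hiS
    refine ⟨hS0 i hiS, fun heq => ?_⟩
    rw [layered_part_eq_iff] at heq
    unfold gfun at heq
    have hlt : S.filter (fun t => t ≤ pr i) ⊂ S.filter (fun t => t ≤ i) := by
      constructor
      · intro t ht
        simp only [Finset.mem_filter] at *
        exact ⟨ht.1, le_trans ht.2 (Fin.le_def.2 (by simp only [pr]; omega))⟩
      · intro hsub
        have hi : i ∈ S.filter (fun t => t ≤ i) := by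
          simp [hiS]
        have := hsub hi
        simp only [Finset.mem_filter] at this
        have := Fin.le_def.1 this.2
        simp only [pr] at this
        have h0 := hS0 i hiS
        omega
    exact absurd heq (Nat.ne_of_lt (Finset.card_lt_card hlt))

/-- counting function on naturals, for intermediate value arguments. -/
def Gfun (S : Finset (Fin n)) (m : ℕ) : ℕ := (S.filter (fun t => t.val < m)).card

lemma gfun_eq_Gfun (S : Finset (Fin n)) (i : Fin n) : gfun S i = Gfun S (i.val + 1) := by
  unfold gfun Gfun
  congr 1
  ext t
  simp only [Finset.mem_filter, and_congr_right_iff]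
  intro _
  rw [Fin.le_def]
  omega

lemma Gfun_zero (S : Finset (Fin n)) : Gfun S 0 = 0 := by
  unfold Gfun
  simp

lemma Gfun_step (S : Finset (Fin n)) (m : ℕ) : Gfun S (m + 1) ≤ Gfun S m + 1 := by
  unfold Gfun
  have hsub : S.filter (fun t => t.val < m + 1) ⊆
      S.filter (fun t => t.val < m) ∪ S.filter (fun t => t.val = m) := by
    intro t ht
    simp only [Finset.mem_filter] at ht
    simp only [Finset.mem_union, Finset.mem_filter]
    rcases Nat.lt_succ_iff_lt_or_eq.1 ht.2 with h | h
    · exact Or.inl ⟨ht.1, h⟩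
    · exact Or.inr ⟨ht.1, h⟩
  refine le_trans (Finset.card_le_card hsub) (le_trans (Finset.card_union_le _ _) ?_)
  have : (S.filter (fun t => t.val = m)).card ≤ 1 := by
    refine Finset.card_le_one.2 (fun a ha b hb => ?_)
    simp only [Finset.mem_filter] at ha hb
    exact Fin.ext (ha.2.trans hb.2.symm)
  omega

lemma Gfun_iv (S : Finset (Fin n)) : ∀ m v, v ≤ Gfun S m → ∃ m' ≤ m, Gfun S m' = v := by
  intro m
  induction m with
  | zero => intro v hv; exact ⟨0, le_rfl, by rw [Gfun_zero] at *; omega⟩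
  | succ m ih =>
    intro v hv
    by_cases h : v ≤ Gfun S m
    · obtain ⟨m', hm', he⟩ := ih v h
      exact ⟨m', le_trans hm' (Nat.le_succ m), he⟩
    · have := Gfun_step S m
      exact ⟨m + 1, le_rfl, by omega⟩

lemma image_gfun {S : Finset (Fin n)} (hS0 : ∀ i ∈ S, i.val ≠ 0) (hn : 0 < n) :
    Finset.univ.image (gfun S) = Finset.range (S.card + 1) := by
  ext v
  simp only [Finset.mem_image, Finset.mem_range, mem_univ, true_and]
  constructor
  · rintro ⟨i, rfl⟩
    have : gfun S i ≤ S.card := Finset.card_le_card (Finset.filter_subset _ _)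
    omega
  · intro hv
    by_cases h0 : v = 0
    · refine ⟨⟨0, hn⟩, ?_⟩
      rw [h0]
      unfold gfun
      rw [Finset.card_eq_zero, Finset.filter_eq_empty_iff]
      intro t ht
      have := hS0 t ht
      rw [Fin.le_def]
      simp
      omega
    · have hGn : Gfun S n = S.card := by
        unfold Gfun
        rw [Finset.filter_true_of_mem (fun t _ => t.isLt)]
      obtain ⟨m', hm', he⟩ := Gfun_iv S n v (by omega)
      have hm0 : m' ≠ 0 := by
        intro h
        rw [h, Gfun_zero] at he
        omega
      refine ⟨⟨m' - 1, by omega⟩, ?_⟩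
      rw [gfun_eq_Gfun]
      simpa using (by rw [show m' - 1 + 1 = m' by omega]; exact he :
        Gfun S (m' - 1 + 1) = v)

lemma part_sup_gfun {S : Finset (Fin n)} {B : Finset (Fin n)} {a : Fin n}
    (hB : B ∈ (layered S).parts) (ha : a ∈ B) : B.sup (gfun S) = gfun S a := by
  have hBa : B = (layered S).part a := ((layered S).part_eq_of_mem hB ha).symm
  have hc : ∀ b ∈ B, gfun S b = gfun S a := by
    intro b hb
    rw [hBa] at hb
    have := (Finpartition.mem_part_iff_part_eq_part (P := layered S) (a := b) (b := a)
      (mem_univ b) (mem_univ a)).1 hb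
    exact layered_part_eq_iff.1 this
  rw [Finset.sup_congr rfl hc, Finset.sup_const ⟨a, ha⟩]

lemma layered_parts_card {S : Finset (Fin n)} (hS0 : ∀ i ∈ S, i.val ≠ 0) (hn : 0 < n) :
    (layered S).parts.card = S.card + 1 := by
  classical
  have hinj : Set.InjOn (fun B : Finset (Fin n) => B.sup (gfun S)) ((layered S).parts : Set (Finset (Fin n))) := by
    intro B hB B' hB' he
    simp only [Finset.mem_coe] at hB hB'
    dsimp only at he
    obtain ⟨a, ha⟩ := (layered S).nonempty_of_mem_parts hB
    obtain ⟨a', ha'⟩ := (layered S).nonempty_of_mem_parts hB'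
    rw [part_sup_gfun hB ha, part_sup_gfun hB' ha'] at he
    have hp := layered_part_eq_iff.2 he
    rw [(layered S).part_eq_of_mem hB ha, (layered S).part_eq_of_mem hB' ha'] at hp
    exact hp
  have himg : (layered S).parts.image (fun B => B.sup (gfun S)) =
      Finset.univ.image (gfun S) := by
    ext v
    simp only [Finset.mem_image, mem_univ, true_and]
    constructor
    · rintro ⟨B, hB, rfl⟩
      obtain ⟨a, ha⟩ := (layered S).nonempty_of_mem_parts hB
      exact ⟨a, (part_sup_gfun hB ha).symm⟩
    · rintro ⟨a, rfl⟩
      exact ⟨(layered S).part a, (layered S).part_mem.2 (mem_univ a),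
        part_sup_gfun ((layered S).part_mem.2 (mem_univ a)) ((layered S).mem_part (mem_univ a))⟩
  rw [← Finset.card_image_of_injOn hinj, himg, image_gfun hS0 hn, Finset.card_range]

end Aux3

section Final
variable {n : ℕ}

lemma part_eq_iff_of_cutSet_eq {P Q : SP n} (hP : avoids13_2 P) (hQ : avoids13_2 Q)
    (h : cutSet P = cutSet Q) : ∀ i j, P.part i = P.part j ↔ Q.part i = Q.part j := by
  have sym : ∀ i j, i ≤ j → (P.part i = P.part j ↔ Q.part i = Q.part j) := by
    intro i j hij
    rw [part_eq_iff_no_cut hP hij, part_eq_iff_no_cut hQ hij, h]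
  intro i j
  rcases le_total i j with hij | hij
  · exact sym i j hij
  · rw [eq_comm, @eq_comm _ (Q.part i)]
    exact sym j i hij

end Final


/-- proof. -/
theorem stmt2 (n k : ℕ) (hk : 2 ≤ k) :
    Nat.card {P : SP n // P.parts.card = k ∧ avoids13_2 P} = (n - 1).choose (k - 1) := by
  classical
  have key : Nat.card {P : SP n // P.parts.card = k ∧ avoids13_2 P} =
      Nat.card {S : Finset (Fin n) // (∀ i ∈ S, i.val ≠ 0) ∧ S.card = k - 1} := by
    refine Nat.card_eq_of_bijective (fun P =>
      ⟨cutSet P.1, fun i hi => (mem_cutSet.1 hi).1, ?_⟩) ⟨?_, ?_⟩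
    · -- cardinality of the cut set
      have hn : 0 < n := by
        have h1 : P.1.parts.card ≤ n := by
          have := P.1.card_parts_le_card
          simpa using this
        omega
      have := cutSet_card P.2.2 hn
      rw [P.2.1] at this
      omega
    · -- injectivity
      intro P Q h
      have hc : cutSet P.1 = cutSet Q.1 := congrArg Subtype.val h
      exact Subtype.ext (eq_of_part_iff (part_eq_iff_of_cutSet_eq P.2.2 Q.2.2 hc))
    · -- surjectivity
      rintro ⟨S, hS0, hcard⟩
      have hSne : S.Nonempty := Finset.card_pos.1 (by omega)
      obtain ⟨i0, _⟩ := hSne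
      have hn : 0 < n := i0.pos
      refine ⟨⟨layered S, ?_, layered_avoids S⟩, ?_⟩
      · rw [layered_parts_card hS0 hn, hcard]
        omega
      · exact Subtype.ext (cutSet_layered hS0)
  rw [key, Nat.card_eq_fintype_card, Fintype.card_subtype]
  have heq : Finset.univ.filter
        (fun S : Finset (Fin n) => (∀ i ∈ S, i.val ≠ 0) ∧ S.card = k - 1)
      = (Finset.univ.filter (fun i : Fin n => i.val ≠ 0)).powersetCard (k - 1) := by
    ext S
    simp only [Finset.mem_filter, Finset.mem_powersetCard, mem_univ, true_and]
    constructor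
    · rintro ⟨h1, h2⟩
      exact ⟨fun i hi => Finset.mem_filter.2 ⟨mem_univ i, h1 i hi⟩, h2⟩
    · rintro ⟨h1, h2⟩
      exact ⟨fun i hi => (Finset.mem_filter.1 (h1 hi)).2, h2⟩
  rw [heq, Finset.card_powersetCard]
  congr 1
  rcases n with _ | m
  · simp
  · have : Finset.univ.filter (fun i : Fin (m + 1) => i.val ≠ 0)
        = Finset.univ.erase (0 : Fin (m + 1)) := by
      ext i
      simp only [Finset.mem_filter, Finset.mem_erase, mem_univ, true_and, and_true]
      exact not_congr (by rw [Fin.ext_iff]; simp)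
    rw [this, Finset.card_erase_of_mem (mem_univ _)]
    simp
end

section
/- For k < n, the number of set partitions of [n] with exactly k blocks avoiding the pattern 1/23 equals k, and it equals 1 when k = n. -/
open Finset Polynomial

/-- The distinguished block: `{0,…,n-k-1} ∪ {n-k+j}`. -/
def blk (n k j : ℕ) : Finset (Fin n) :=
  Finset.univ.filter (fun x => x.val < n - k ∨ x.val = n - k + j)

lemma mem_blk {n k j : ℕ} {x : Fin n} :
    x ∈ blk n k j ↔ x.val < n - k ∨ x.val = n - k + j := by
  simp [blk]

lemma blk_eq_insert {n k j : ℕ} (hk : k < n) (hj : j < k) :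
    blk n k j = insert ⟨n - k + j, by omega⟩
      (Finset.univ.filter (fun x : Fin n => x.val < n - k)) := by
  ext x
  simp only [mem_blk, Finset.mem_insert, Finset.mem_filter, Finset.mem_univ, true_and]
  constructor
  · rintro (h | h)
    · exact Or.inr h
    · exact Or.inl (Fin.ext h)
  · rintro (h | h)
    · exact Or.inr (congrArg Fin.val h)
    · exact Or.inl h

lemma filter_lt_eq_Iic {n t : ℕ} (ht : t < n) :
    Finset.univ.filter (fun x : Fin n => x.val < t + 1)
      = Finset.Iic (⟨t, ht⟩ : Fin n) := by
  ext x
  simp [Fin.le_def, Nat.lt_succ_iff]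

lemma card_filter_le {n t : ℕ} (ht : t < n) :
    (Finset.univ.filter (fun x : Fin n => x.val < t + 1)).card = t + 1 := by
  rw [filter_lt_eq_Iic ht, Fin.card_Iic]

lemma card_filter_lt {n k : ℕ} (hk : k < n) :
    (Finset.univ.filter (fun x : Fin n => x.val < n - k)).card = n - k := by
  have h1 : n - k - 1 < n := by omega
  have h2 : Finset.univ.filter (fun x : Fin n => x.val < n - k)
      = Finset.univ.filter (fun x : Fin n => x.val < (n - k - 1) + 1) := by
    ext x
    simp only [Finset.mem_filter, Finset.mem_univ, true_and]
    omega
  rw [h2, card_filter_le h1]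
  omega

lemma card_blk {n k j : ℕ} (hk : k < n) (hj : j < k) :
    (blk n k j).card = n - k + 1 := by
  rw [blk_eq_insert hk hj, Finset.card_insert_of_notMem, card_filter_lt hk]
  simp only [Finset.mem_filter, Finset.mem_univ, true_and]
  omega

/-- The `j`-th 1/23-avoiding partition with `k` blocks. -/
def Qpart (n k j : ℕ) (hk : k < n) (hj : j < k) : SP n where
  parts := insert (blk n k j) ((Finset.univ \ blk n k j).image ({·}))
  supIndep := by
    rw [Finset.supIndep_iff_pairwiseDisjoint]
    intro t ht u hu htu
    simp only [Finset.coe_insert, Set.mem_insert_iff, Finset.coe_image, Set.mem_image,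
      Finset.mem_coe, Finset.mem_sdiff, Finset.mem_univ, true_and] at ht hu
    rcases ht with rfl | ⟨x, hx, rfl⟩ <;> rcases hu with rfl | ⟨y, hy, rfl⟩
    · exact absurd rfl htu
    · simp only [Function.onFun, id_eq, Finset.disjoint_singleton_right]
      exact hy
    · simp only [Function.onFun, id_eq, Finset.disjoint_singleton_left]
      exact hx
    · simp only [Function.onFun, id_eq, Finset.disjoint_singleton_right,
        Finset.mem_singleton]
      rintro rfl; exact htu rfl
  sup_parts := by
    apply Finset.Subset.antisymm
    · intro x hx
      exact Finset.mem_univ x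
    · intro x _
      rw [Finset.mem_sup]
      by_cases hx : x ∈ blk n k j
      · exact ⟨blk n k j, Finset.mem_insert_self _ _, hx⟩
      · exact ⟨{x}, Finset.mem_insert_of_mem
          (Finset.mem_image.2 ⟨x, by simp [hx], rfl⟩), Finset.mem_singleton_self x⟩
  bot_notMem := by
    simp only [Finset.bot_eq_empty, Finset.mem_insert, Finset.mem_image]
    push_neg
    constructor
    · intro h
      have : (⟨0, by omega⟩ : Fin n) ∈ blk n k j := mem_blk.2 (by simp; omega)
      rw [← h] at this
      exact absurd this (Finset.notMem_empty _)
    · intro x _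
      exact Finset.singleton_nonempty x

lemma Qpart_parts {n k j : ℕ} (hk : k < n) (hj : j < k) :
    (Qpart n k j hk hj).parts
      = insert (blk n k j) ((Finset.univ \ blk n k j).image ({·})) := rfl

lemma blk_ne_singleton {n k j : ℕ} (hk : k < n) (hj : j < k) (x : Fin n) :
    blk n k j ≠ {x} := by
  intro h
  have := card_blk hk hj
  rw [h, Finset.card_singleton] at this
  omega

lemma blk_not_mem_image {n k j : ℕ} (hk : k < n) (hj : j < k) :
    blk n k j ∉ (Finset.univ \ blk n k j).image ({·} : Fin n → Finset (Fin n)) := by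
  intro h
  obtain ⟨x, _, hx⟩ := Finset.mem_image.1 h
  have := card_blk hk hj
  rw [← hx, Finset.card_singleton] at this
  omega

lemma Qpart_card {n k j : ℕ} (hk : k < n) (hj : j < k) :
    (Qpart n k j hk hj).parts.card = k := by
  rw [Qpart_parts, Finset.card_insert_of_notMem (blk_not_mem_image hk hj),
    Finset.card_image_of_injective _ (fun a b hab => by
      simpa using hab),
    Finset.card_sdiff_of_subset (Finset.subset_univ _), Finset.card_univ, Fintype.card_fin,
    card_blk hk hj]
  omega

lemma Qpart_avoids {n k j : ℕ} (hk : k < n) (hj : j < k) :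
    avoids1_23 (Qpart n k j hk hj) := by
  rintro ⟨a, b, c, hab, hbc, ⟨B, hB, hbB, hcB⟩, hnab⟩
  rw [Qpart_parts] at hB
  have hB' : B = blk n k j ∨ ∃ x, B = {x} := by
    rcases Finset.mem_insert.1 hB with h | h
    · exact Or.inl h
    · obtain ⟨x, hx, hx'⟩ := Finset.mem_image.1 h
      exact Or.inr ⟨x, hx'.symm⟩
  rcases hB' with rfl | ⟨x, rfl⟩
  · have hb := mem_blk.1 hbB
    have hc := mem_blk.1 hcB
    have hbc' : b.val < c.val := hbc
    have hab' : a.val < b.val := hab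
    have hbval : b.val < n - k := by
      rcases hb with h | h
      · exact h
      · exfalso
        rcases hc with h' | h' <;> omega
    have haB : a ∈ blk n k j := mem_blk.2 (Or.inl (by omega))
    exact hnab ⟨blk n k j, Finset.mem_insert_self _ _, haB, hbB⟩
  · rw [Finset.mem_singleton] at hbB hcB
    rw [hbB, hcB] at hbc
    exact absurd rfl (ne_of_lt hbc)

lemma closure_lemma {n : ℕ} (P : SP n) (hav : avoids1_23 P)
    {B : Finset (Fin n)} (hB : B ∈ P.parts) {b c : Fin n} (hbB : b ∈ B) (hcB : c ∈ B)
    (hbc : b < c) {a : Fin n} (hab : a < b) : a ∈ B := by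
  by_contra haB
  apply hav
  refine ⟨a, b, c, hab, hbc, ⟨B, hB, hbB, hcB⟩, ?_⟩
  rintro ⟨B', hB', haB', hbB'⟩
  exact haB (P.eq_of_mem_parts hB' hB hbB' hbB ▸ haB')

lemma all_singletons {n : ℕ} (P : SP n) (h : P.parts.card = n) :
    ∀ B ∈ P.parts, B.card = 1 := by
  by_contra hc
  push_neg at hc
  obtain ⟨B, hB, hB1⟩ := hc
  have h1 : 1 ≤ B.card := Finset.card_pos.2 (P.nonempty_of_mem_parts hB)
  have hlt : ∑ C ∈ P.parts, (1 : ℕ) < ∑ C ∈ P.parts, C.card := by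
    apply Finset.sum_lt_sum
    · intro C hC
      exact Finset.card_pos.2 (P.nonempty_of_mem_parts hC)
    · exact ⟨B, hB, by omega⟩
  rw [Finset.sum_const, smul_eq_mul, mul_one, h, P.sum_card_parts,
    Finset.card_univ, Fintype.card_fin] at hlt
  omega

lemma bot_avoids (n : ℕ) : avoids1_23 (⊥ : SP n) := by
  rintro ⟨a, b, c, hab, hbc, ⟨B, hB, hbB, hcB⟩, -⟩
  rw [Finpartition.mem_bot_iff] at hB
  obtain ⟨x, -, rfl⟩ := hB
  rw [Finset.mem_singleton] at hbB hcB
  exact absurd (hbB.trans hcB.symm) (ne_of_lt hbc)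

lemma eq_bot_of_card {n : ℕ} (P : SP n) (h : P.parts.card = n) : P = ⊥ := by
  have hs := all_singletons P h
  apply Finpartition.ext
  ext C
  rw [Finpartition.mem_bot_iff]
  constructor
  · intro hC
    obtain ⟨x, hx⟩ := Finset.card_eq_one.1 (hs C hC)
    exact ⟨x, Finset.mem_univ x, hx.symm⟩
  · rintro ⟨x, -, rfl⟩
    obtain ⟨C', hC', hxC'⟩ := P.exists_mem (Finset.mem_univ x)
    obtain ⟨y, hy⟩ := Finset.card_eq_one.1 (hs C' hC')
    rw [hy, Finset.mem_singleton] at hxC'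
    subst hxC'
    rwa [← hy]

/-- Any non-singleton block of an avoiding partition contains 0. -/
lemma zero_mem_big_block {n : ℕ} (P : SP n) (hav : avoids1_23 P) (hn : 0 < n)
    {B : Finset (Fin n)} (hB : B ∈ P.parts) (hB2 : 2 ≤ B.card) :
    (⟨0, hn⟩ : Fin n) ∈ B := by
  have hBne : B.Nonempty := Finset.card_pos.1 (by omega)
  set m := B.max' hBne with hm
  have hmB : m ∈ B := B.max'_mem hBne
  have heBne : (B.erase m).Nonempty := by
    rw [← Finset.card_pos, Finset.card_erase_of_mem hmB]; omega
  set t := (B.erase m).max' heBne with ht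
  have htB : t ∈ B := Finset.mem_of_mem_erase ((B.erase m).max'_mem heBne)
  have htm' : t < m := lt_of_le_of_ne (B.le_max' t htB)
    (Finset.ne_of_mem_erase ((B.erase m).max'_mem heBne))
  rcases eq_or_lt_of_le (show (⟨0, hn⟩ : Fin n) ≤ t from Fin.mk_le_of_le_val (Nat.zero_le _))
    with h | h
  · rw [← h] at htB; exact htB
  · exact closure_lemma P hav hB htB hmB htm' h

lemma surj_lemma {n k : ℕ} (hk : k < n) (P : SP n) (hcard : P.parts.card = k)
    (hav : avoids1_23 P) : ∃ j : ℕ, ∃ hj : j < k, P = Qpart n k j hk hj := by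
  have hn : 0 < n := by omega
  have hsum : ∑ C ∈ P.parts, C.card = n := by
    rw [P.sum_card_parts, Finset.card_univ, Fintype.card_fin]
  have hbig : ∃ B ∈ P.parts, 2 ≤ B.card := by
    by_contra hc
    push_neg at hc
    have : ∑ C ∈ P.parts, C.card ≤ ∑ C ∈ P.parts, 1 :=
      Finset.sum_le_sum (fun C hC => by have := hc C hC; omega)
    rw [Finset.sum_const, smul_eq_mul, mul_one, hcard] at this
    omega
  obtain ⟨B, hB, hB2⟩ := hbig
  have hBne : B.Nonempty := Finset.card_pos.1 (by omega)
  set m := B.max' hBne with hm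
  have hmB : m ∈ B := B.max'_mem hBne
  have heBne : (B.erase m).Nonempty := by
    rw [← Finset.card_pos, Finset.card_erase_of_mem hmB]; omega
  set t := (B.erase m).max' heBne with ht
  have htB : t ∈ B := Finset.mem_of_mem_erase ((B.erase m).max'_mem heBne)
  have htm' : t < m := lt_of_le_of_ne (B.le_max' t htB)
    (Finset.ne_of_mem_erase ((B.erase m).max'_mem heBne))
  have hsub : ∀ a : Fin n, a ≤ t → a ∈ B := by
    intro a ha
    rcases eq_or_lt_of_le ha with rfl | ha'
    · exact htB
    · exact closure_lemma P hav hB htB hmB htm' ha'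
  have hsup : ∀ x ∈ B, x ≠ m → x ≤ t := by
    intro x hx hxm
    exact Finset.le_max' _ x (Finset.mem_erase.2 ⟨hxm, hx⟩)
  -- all other blocks are singletons
  have hsing : ∀ C ∈ P.parts, C ≠ B → C.card = 1 := by
    intro C hC hCB
    by_contra hc
    have hC2 : 2 ≤ C.card := by
      have := Finset.card_pos.2 (P.nonempty_of_mem_parts hC); omega
    have h0C := zero_mem_big_block P hav hn hC hC2
    have h0B := zero_mem_big_block P hav hn hB hB2
    exact hCB (P.eq_of_mem_parts hC hB h0C h0B)
  -- compute the card of B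
  have hsum2 : ∑ C ∈ P.parts.erase B, C.card + B.card = n := by
    rw [Finset.sum_erase_add _ _ hB, hsum]
  have hsum3 : ∑ C ∈ P.parts.erase B, C.card = k - 1 := by
    rw [Finset.sum_congr rfl (fun C hC =>
      hsing C (Finset.mem_of_mem_erase hC) (Finset.ne_of_mem_erase hC)),
      Finset.sum_const, smul_eq_mul, mul_one, Finset.card_erase_of_mem hB, hcard]
  have hk1 : 1 ≤ k := hcard ▸ Finset.card_pos.2 ⟨B, hB⟩
  have hcardB : B.card = n - k + 1 := by omega
  -- B is an explicit set
  have hBeq : B = insert m (Finset.univ.filter (fun x : Fin n => x.val < t.val + 1)) := by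
    ext x
    simp only [Finset.mem_insert, Finset.mem_filter, Finset.mem_univ, true_and,
      Nat.lt_succ_iff]
    constructor
    · intro hx
      by_cases hxm : x = m
      · exact Or.inl hxm
      · exact Or.inr (hsup x hx hxm)
    · rintro (rfl | h)
      · exact hmB
      · exact hsub x h
  have hmnot : m ∉ Finset.univ.filter (fun x : Fin n => x.val < t.val + 1) := by
    simp only [Finset.mem_filter, Finset.mem_univ, true_and, Nat.lt_succ_iff]
    intro h
    exact absurd htm' (not_lt.2 (Fin.le_def.2 h))
  have hcardB2 : B.card = t.val + 2 := by
    rw [hBeq, Finset.card_insert_of_notMem hmnot, card_filter_le t.isLt]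
  have htval : t.val = n - k - 1 := by omega
  have hmval : n - k ≤ m.val := by
    have : t.val < m.val := htm'
    omega
  refine ⟨m.val - (n - k), by have := m.isLt; omega, ?_⟩
  set j := m.val - (n - k) with hj
  have hjk : j < k := by have := m.isLt; omega
  have hmj : m.val = n - k + j := by omega
  have hBblk : B = blk n k j := by
    ext x
    rw [mem_blk]
    constructor
    · intro hx
      by_cases hxm : x = m
      · subst hxm; exact Or.inr hmj
      · have := hsup x hx hxm
        have hxt : x.val ≤ t.val := this
        left; omega
    · rintro (h | h)
      · exact hsub x (Fin.le_def.2 (by omega))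
      · have : x = m := Fin.ext (by omega)
        subst this; exact hmB
  -- conclude P = Qpart
  apply Finpartition.ext
  rw [Qpart_parts]
  ext C
  constructor
  · intro hC
    by_cases hCB : C = B
    · subst hCB; rw [hBblk]; exact Finset.mem_insert_self _ _
    · obtain ⟨x, hx⟩ := Finset.card_eq_one.1 (hsing C hC hCB)
      subst hx
      apply Finset.mem_insert_of_mem
      apply Finset.mem_image.2
      refine ⟨x, ?_, rfl⟩
      rw [Finset.mem_sdiff, ← hBblk]
      refine ⟨Finset.mem_univ x, fun hxB => ?_⟩
      exact hCB (P.eq_of_mem_parts hC hB (Finset.mem_singleton_self x) hxB)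
  · intro hC
    rcases Finset.mem_insert.1 hC with rfl | h
    · rw [← hBblk]; exact hB
    · obtain ⟨x, hx, rfl⟩ := Finset.mem_image.1 h
      rw [Finset.mem_sdiff, ← hBblk] at hx
      obtain ⟨C', hC', hxC'⟩ := P.exists_mem (Finset.mem_univ x)
      have hC'B : C' ≠ B := fun h' => hx.2 (h' ▸ hxC')
      obtain ⟨y, hy⟩ := Finset.card_eq_one.1 (hsing C' hC' hC'B)
      rw [hy, Finset.mem_singleton] at hxC'
      subst hxC'
      rw [← hy]; exact hC'

lemma inj_lemma {n k : ℕ} (hk : k < n) {j j' : ℕ} (hj : j < k) (hj' : j' < k)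
    (h : Qpart n k j hk hj = Qpart n k j' hk hj') : j = j' := by
  have hparts : (Qpart n k j hk hj).parts = (Qpart n k j' hk hj').parts := by rw [h]
  rw [Qpart_parts, Qpart_parts] at hparts
  have hmem : blk n k j ∈ insert (blk n k j')
      ((Finset.univ \ blk n k j').image ({·} : Fin n → Finset (Fin n))) := by
    rw [← hparts]; exact Finset.mem_insert_self _ _
  rcases Finset.mem_insert.1 hmem with heq | himg
  · have hlt : n - k + j < n := by omega
    have hmm : (⟨n - k + j, hlt⟩ : Fin n) ∈ blk n k j' := by
      rw [← heq]; exact mem_blk.2 (Or.inr rfl)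
    have hval : (⟨n - k + j, hlt⟩ : Fin n).val = n - k + j := rfl
    rcases mem_blk.1 hmm with h' | h' <;> omega
  · obtain ⟨x, -, hx⟩ := Finset.mem_image.1 himg
    exact absurd hx.symm (blk_ne_singleton hk hj x)

/-- For `k < n`, the number of `k`-block set partitions of `[n]` avoiding
`1/23` equals `k`, and it equals `1` when `k = n`. -/
theorem stmt3 (n k : ℕ) :
    (k < n → Nat.card {P : SP n // P.parts.card = k ∧ avoids1_23 P} = k) ∧
    (k = n → Nat.card {P : SP n // P.parts.card = k ∧ avoids1_23 P} = 1) := by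
  constructor
  · intro hk
    have hbij : Function.Bijective (fun j : Fin k =>
        (⟨Qpart n k j.val hk j.isLt, Qpart_card hk j.isLt, Qpart_avoids hk j.isLt⟩ :
          {P : SP n // P.parts.card = k ∧ avoids1_23 P})) := by
      constructor
      · intro a b hab
        have := congrArg Subtype.val hab
        exact Fin.ext (inj_lemma hk a.isLt b.isLt this)
      · rintro ⟨P, hPc, hPa⟩
        obtain ⟨j, hj, hPQ⟩ := surj_lemma hk P hPc hPa
        exact ⟨⟨j, hj⟩, by simp [← hPQ]⟩
    calc Nat.card {P : SP n // P.parts.card = k ∧ avoids1_23 P}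
        = Nat.card (Fin k) := (Nat.card_eq_of_bijective _ hbij).symm
      _ = k := by simp
  · intro hkn
    subst hkn
    rw [Nat.card_eq_one_iff_unique]
    constructor
    · constructor
      rintro ⟨P, hPc, -⟩ ⟨P', hPc', -⟩
      have h1 := eq_bot_of_card P hPc
      have h2 := eq_bot_of_card P' hPc'
      subst h1; subst h2
      rfl
    · refine ⟨⟨⊥, ?_, bot_avoids k⟩⟩
      rw [Finpartition.card_bot, Finset.card_univ, Fintype.card_fin]
end

section
/- For k < n, the number of set partitions of [n] with exactly k blocks avoiding the pattern 12/3 equals k, and it equals 1 when k = n. -/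
open Finset Polynomial

namespace Stmt4Aux

variable {n k : ℕ}

lemma inSameBlock_iff (P : SP n) (i j : Fin n) :
    inSameBlock P i j ↔ P.part i = P.part j := by
  constructor
  · rintro ⟨B, hB, hi, hj⟩
    rw [P.part_eq_of_mem hB hi, P.part_eq_of_mem hB hj]
  · intro h
    exact ⟨P.part j, P.part_mem.mpr (mem_univ j), h ▸ P.mem_part (mem_univ i),
      P.mem_part (mem_univ j)⟩

/-- The coloring: `x ↦ x` if `x < k`, else `j`. -/
def cfun (k : ℕ) (j : Fin k) (x : Fin n) : Fin k :=
  if h : x.val < k then ⟨x.val, h⟩ else j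

lemma cfun_low (j : Fin k) {x : Fin n} (h : x.val < k) : cfun k j x = ⟨x.val, h⟩ := dif_pos h

lemma cfun_high (j : Fin k) {x : Fin n} (h : k ≤ x.val) : cfun k j x = j :=
  dif_neg (not_lt.mpr h)

/-- The fiber of `i` under `cfun k j`. -/
def fib (n k : ℕ) (j i : Fin k) : Finset (Fin n) :=
  Finset.univ.filter fun x => cfun k j x = i

lemma mem_fib {j i : Fin k} {x : Fin n} : x ∈ fib n k j i ↔ cfun k j x = i := by
  simp [fib]

/-- The partition of `Fin n` into fibers of `cfun k j`. -/
def fpart (hkn : k ≤ n) (j : Fin k) : SP n where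
  parts := Finset.univ.image fun i : Fin k => fib n k j i
  supIndep := by
    rw [Finset.supIndep_iff_pairwiseDisjoint]
    rintro B hB B' hB' hne
    simp only [coe_image, coe_univ, Set.image_univ, Set.mem_range] at hB hB'
    obtain ⟨i, rfl⟩ := hB
    obtain ⟨i', rfl⟩ := hB'
    have hii : i ≠ i' := fun h => hne (by rw [h])
    refine Finset.disjoint_left.mpr fun x hx hx' => hii ?_
    rw [id_eq, mem_fib] at hx hx'
    rw [← hx, hx']
  sup_parts := by
    ext x
    simp only [mem_univ, iff_true, Finset.mem_sup, mem_image]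
    exact ⟨fib n k j (cfun k j x), ⟨cfun k j x, by simp⟩, mem_fib.mpr rfl⟩
  bot_notMem := by
    simp only [Finset.bot_eq_empty, mem_image, not_exists]
    rintro i ⟨-, h⟩
    have : (⟨i.val, lt_of_lt_of_le i.isLt hkn⟩ : Fin n) ∈ fib n k j i :=
      mem_fib.mpr (cfun_low j i.isLt)
    rw [h] at this
    exact absurd this (Finset.notMem_empty _)

lemma mem_fpart_parts {hkn : k ≤ n} {j : Fin k} {B : Finset (Fin n)} :
    B ∈ (fpart hkn j).parts ↔ ∃ i : Fin k, B = fib n k j i := by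
  simp [fpart, eq_comm]

lemma fib_eq_iff {j i i' : Fin k} (hkn : k ≤ n) : fib n k j i = fib n k j i' ↔ i = i' := by
  constructor
  · intro h
    have : (⟨i.val, lt_of_lt_of_le i.isLt hkn⟩ : Fin n) ∈ fib n k j i :=
      mem_fib.mpr (cfun_low j i.isLt)
    rw [h, mem_fib] at this
    have hlt : ((⟨i.val, lt_of_lt_of_le i.isLt hkn⟩ : Fin n)).val < k := i.isLt
    rw [cfun_low j hlt] at this
    exact Fin.ext (congrArg Fin.val this)
  · rintro rfl; rfl

lemma part_fpart (hkn : k ≤ n) (j : Fin k) (x : Fin n) :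
    (fpart hkn j).part x = fib n k j (cfun k j x) :=
  Finpartition.part_eq_of_mem _ (mem_fpart_parts.mpr ⟨_, rfl⟩) (mem_fib.mpr rfl)

lemma inSameBlock_fpart {hkn : k ≤ n} {j : Fin k} {x y : Fin n} :
    inSameBlock (fpart hkn j) x y ↔ cfun k j x = cfun k j y := by
  rw [inSameBlock_iff, part_fpart, part_fpart, fib_eq_iff hkn]

lemma card_fpart (hkn : k ≤ n) (j : Fin k) : (fpart hkn j).parts.card = k := by
  rw [show (fpart hkn j).parts = Finset.univ.image fun i : Fin k => fib n k j i from rfl,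
    Finset.card_image_of_injective _ fun i i' h => (fib_eq_iff hkn).mp h]
  simp

lemma avoids_fpart (hkn : k ≤ n) (j : Fin k) : avoids12_3 (fpart hkn j) := by
  rintro ⟨a, b, c, hab, hbc, h1, h2⟩
  rw [inSameBlock_fpart] at h1
  apply h2
  rw [inSameBlock_fpart]
  by_cases hb : b.val < k
  · have ha : a.val < k := lt_trans (Fin.lt_def.mp hab) hb
    rw [cfun_low j ha, cfun_low j hb] at h1
    exact absurd (congrArg Fin.val h1) (Nat.ne_of_lt (Fin.lt_def.mp hab))
  · have hc : k ≤ c.val := le_trans (not_lt.mp hb) (le_of_lt (Fin.lt_def.mp hbc))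
    rw [h1, cfun_high j (not_lt.mp hb), cfun_high j hc]


lemma up_lemma {P : SP n} (hav : avoids12_3 P) {a x y : Fin n} (hax : a < x)
    (hpx : P.part a = P.part x) (hxy : x < y) : P.part a = P.part y := by
  by_contra h
  exact hav ⟨a, x, y, hax, hxy, (inSameBlock_iff P a x).mpr hpx,
    fun hc => h ((inSameBlock_iff P a y).mp hc)⟩

lemma exists_eq_fpart (hkn : k < n) (P : SP n) (hcard : P.parts.card = k)
    (hav : avoids12_3 P) : ∃ j : Fin k, P = fpart hkn.le j := by
  classical
  set S : Finset (Fin n) := Finset.univ.filter (fun x => ∃ a, a < x ∧ P.part a = P.part x)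
    with hS
  have hSne : S.Nonempty := by
    by_contra hemp
    rw [Finset.not_nonempty_iff_eq_empty, Finset.filter_eq_empty_iff] at hemp
    have hinj : Set.InjOn P.part (Finset.univ : Finset (Fin n)) := by
      intro x _ y _ hxy
      rcases lt_trichotomy x y with h | h | h
      · exact absurd ⟨x, h, hxy⟩ (hemp (mem_univ y))
      · exact h
      · exact absurd ⟨y, h, hxy.symm⟩ (hemp (mem_univ x))
    have hmaps : ∀ x ∈ (Finset.univ : Finset (Fin n)), P.part x ∈ P.parts :=
      fun x _ => P.part_mem.mpr (mem_univ x)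
    have := Finset.card_le_card_of_injOn P.part hmaps hinj
    rw [hcard] at this
    simp only [Finset.card_univ, Fintype.card_fin] at this
    omega
  set m : Fin n := S.min' hSne with hm
  have hmS : m ∈ S := S.min'_mem hSne
  rw [hS, Finset.mem_filter] at hmS
  obtain ⟨-, a, ham, hpam⟩ := hmS
  -- every y ≥ m is in the part of a
  have F1 : ∀ y : Fin n, m ≤ y → P.part y = P.part a := by
    intro y hy
    rcases eq_or_lt_of_le hy with rfl | hy
    · exact hpam.symm
    · exact (up_lemma hav ham hpam hy).symm
  -- injectivity below m
  have F3 : ∀ x y : Fin n, x < m → y < m → P.part x = P.part y → x = y := by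
    intro x y hx hy hxy
    rcases lt_trichotomy x y with h | h | h
    · exact absurd (S.min'_le y (Finset.mem_filter.mpr ⟨mem_univ y, x, h, hxy⟩)) (not_le.mpr hy)
    · exact h
    · exact absurd (S.min'_le x (Finset.mem_filter.mpr ⟨mem_univ x, y, h, hxy.symm⟩))
        (not_le.mpr hx)
  -- the parts of P
  have hparts : P.parts = (Finset.Iio m).image P.part := by
    ext B
    constructor
    · intro hB
      obtain ⟨x, hxB⟩ := P.nonempty_of_mem_parts hB
      have hBx : P.part x = B := P.part_eq_of_mem hB hxB
      rcases lt_or_ge x m with h | h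
      · exact Finset.mem_image.mpr ⟨x, Finset.mem_Iio.mpr h, hBx⟩
      · exact Finset.mem_image.mpr ⟨a, Finset.mem_Iio.mpr ham, by rw [← F1 x h, hBx]⟩
    · intro hB
      obtain ⟨x, -, rfl⟩ := Finset.mem_image.mp hB
      exact P.part_mem.mpr (mem_univ x)
  have hkm : m.val = k := by
    have h1 : ((Finset.Iio m).image P.part).card = (Finset.Iio m).card :=
      Finset.card_image_of_injOn fun x hx y hy hxy =>
        F3 x y (Finset.mem_Iio.mp hx) (Finset.mem_Iio.mp hy) hxy
    rw [← hcard, hparts, h1, Fin.card_Iio]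
  -- the individual parts
  have G1 : ∀ x : Fin n, x < m → x ≠ a → P.part x = {x} := by
    intro x hx hxa
    ext y
    simp only [Finset.mem_singleton]
    constructor
    · intro hy
      have hpy : P.part y = P.part x := P.part_eq_of_mem (P.part_mem.mpr (mem_univ x)) hy ▸ rfl
      rcases lt_or_ge y m with h | h
      · exact F3 y x h hx hpy
      · exact absurd (F3 x a hx ham (by rw [← hpy, F1 y h])) hxa
    · rintro rfl
      exact P.mem_part (mem_univ y)
  have G2 : ∀ y : Fin n, y ∈ P.part a ↔ (y = a ∨ m ≤ y) := by
    intro y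
    constructor
    · intro hy
      have hpy : P.part y = P.part a := P.part_eq_of_mem (P.part_mem.mpr (mem_univ a)) hy ▸ rfl
      rcases lt_or_ge y m with h | h
      · exact Or.inl (F3 y a h ham hpy)
      · exact Or.inr h
    · rintro (rfl | h)
      · exact P.mem_part (mem_univ y)
      · rw [← F1 y h]; exact P.mem_part (mem_univ y)
  have hak : a.val < k := hkm ▸ (Fin.lt_def.mp ham)
  refine ⟨⟨a.val, hak⟩, Finpartition.ext ?_⟩
  -- compute the fibers
  have hfj : fib n k ⟨a.val, hak⟩ ⟨a.val, hak⟩ = P.part a := by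
    ext y
    rw [mem_fib, G2]
    constructor
    · intro h
      by_cases hy : y.val < k
      · left
        rw [cfun_low _ hy] at h
        exact Fin.ext (Fin.mk_eq_mk.mp h)
      · right
        rw [Fin.le_def, hkm]
        omega
    · rintro (rfl | h)
      · exact cfun_low _ hak
      · exact cfun_high _ (by rw [← hkm]; exact Fin.le_def.mp h)
  have hfi : ∀ i : Fin k, i ≠ ⟨a.val, hak⟩ →
      fib n k ⟨a.val, hak⟩ i = {(⟨i.val, lt_trans i.isLt hkn⟩ : Fin n)} := by
    intro i hij
    ext y
    rw [mem_fib, Finset.mem_singleton]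
    constructor
    · intro h
      by_cases hy : y.val < k
      · rw [cfun_low _ hy] at h
        exact Fin.ext (show y.val = i.val from congrArg Fin.val h)
      · rw [cfun_high (⟨a.val, hak⟩ : Fin k) (not_lt.mp hy)] at h
        exact absurd h (Ne.symm hij)
    · rintro rfl
      exact cfun_low _ i.isLt
  -- conclude
  rw [hparts]
  ext B
  rw [mem_fpart_parts, Finset.mem_image]
  constructor
  · rintro ⟨x, hx, rfl⟩
    rw [Finset.mem_Iio] at hx
    by_cases hxa : x = a
    · subst hxa
      exact ⟨⟨x.val, hak⟩, hfj.symm⟩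
    · refine ⟨⟨x.val, hkm ▸ (Fin.lt_def.mp hx)⟩, ?_⟩
      rw [hfi _ (fun h => hxa (Fin.ext (Fin.mk_eq_mk.mp h))), G1 x hx hxa]
  · rintro ⟨i, rfl⟩
    by_cases hij : i = ⟨a.val, hak⟩
    · subst hij
      exact ⟨a, Finset.mem_Iio.mpr ham, hfj ▸ rfl⟩
    · have hxm : (⟨i.val, lt_trans i.isLt hkn⟩ : Fin n) < m := Fin.lt_def.mpr (hkm ▸ i.isLt)
      have hxa : (⟨i.val, lt_trans i.isLt hkn⟩ : Fin n) ≠ a := fun h =>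
        hij (Fin.ext (show i.val = a.val from congrArg Fin.val h))
      exact ⟨_, Finset.mem_Iio.mpr hxm, by rw [G1 _ hxm hxa, hfi i hij]⟩


lemma eq_bot_of_card_parts (P : SP n) (h : P.parts.card = n) :
    P = (⊥ : Finpartition (Finset.univ : Finset (Fin n))) := by
  classical
  have hsum : ∑ B ∈ P.parts, B.card = n := by
    rw [Finpartition.sum_card_parts]
    simp
  have hone : ∀ B ∈ P.parts, B.card = 1 := by
    by_contra hc
    push_neg at hc
    obtain ⟨B0, hB0, hB0c⟩ := hc
    have h1 : ∀ B ∈ P.parts, 1 ≤ B.card := fun B hB =>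
      Finset.card_pos.mpr (P.nonempty_of_mem_parts hB)
    have : ∑ B ∈ P.parts, 1 < ∑ B ∈ P.parts, B.card :=
      Finset.sum_lt_sum h1 ⟨B0, hB0, lt_of_le_of_ne (h1 B0 hB0) (Ne.symm hB0c)⟩
    rw [Finset.sum_const, smul_eq_mul, mul_one, h, hsum] at this
    omega
  apply Finpartition.ext
  ext B
  rw [Finpartition.mem_bot_iff]
  constructor
  · intro hB
    obtain ⟨x, hx⟩ := Finset.card_eq_one.mp (hone B hB)
    exact ⟨x, mem_univ x, hx.symm⟩
  · rintro ⟨x, -, rfl⟩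
    have hp := P.part_mem.mpr (mem_univ x)
    have := hone _ hp
    obtain ⟨y, hy⟩ := Finset.card_eq_one.mp this
    have hx : x ∈ P.part x := P.mem_part (mem_univ x)
    rw [hy, Finset.mem_singleton] at hx
    subst hx
    rw [← hy]
    exact hp

lemma avoids_bot : avoids12_3 (⊥ : Finpartition (Finset.univ : Finset (Fin n))) := by
  rintro ⟨a, b, c, hab, -, ⟨B, hB, haB, hbB⟩, -⟩
  obtain ⟨x, -, rfl⟩ := Finpartition.mem_bot_iff.mp hB
  rw [Finset.mem_singleton] at haB hbB
  exact absurd (haB.trans hbB.symm) (ne_of_lt hab)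

lemma count_lt (hkn : k < n) :
    Nat.card {P : SP n // P.parts.card = k ∧ avoids12_3 P} = k := by
  classical
  have hb : Function.Bijective
      (fun j : Fin k => (⟨fpart hkn.le j, card_fpart hkn.le j, avoids_fpart hkn.le j⟩ :
        {P : SP n // P.parts.card = k ∧ avoids12_3 P})) := by
    constructor
    · intro j j' h
      have heq : fpart hkn.le j = fpart hkn.le j' := congrArg Subtype.val h
      have h1 : inSameBlock (fpart hkn.le j) ⟨j.val, lt_trans j.isLt hkn⟩ ⟨k, hkn⟩ := by
        rw [inSameBlock_fpart, cfun_low (x := ⟨j.val, lt_trans j.isLt hkn⟩) j j.isLt,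
          cfun_high (x := ⟨k, hkn⟩) j (le_refl k)]
      rw [heq, inSameBlock_fpart, cfun_low (x := ⟨j.val, lt_trans j.isLt hkn⟩) j' j.isLt,
        cfun_high (x := ⟨k, hkn⟩) j' (le_refl k)] at h1
      exact Fin.ext (show j.val = j'.val from congrArg Fin.val h1)
    · rintro ⟨P, hP, hav⟩
      obtain ⟨j, rfl⟩ := exists_eq_fpart hkn P hP hav
      exact ⟨j, rfl⟩
  rw [← Nat.card_eq_of_bijective _ hb]
  simp

lemma count_eq :
    Nat.card {P : SP n // P.parts.card = n ∧ avoids12_3 P} = 1 := by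
  rw [Nat.card_eq_one_iff_unique]
  constructor
  · constructor
    rintro ⟨P, hP, -⟩ ⟨Q, hQ, -⟩
    exact Subtype.ext ((eq_bot_of_card_parts P hP).trans (eq_bot_of_card_parts Q hQ).symm)
  · exact ⟨⟨⊥, by rw [Finpartition.card_bot]; simp, avoids_bot⟩⟩

end Stmt4Aux

/-- For `k < n`, the number of `k`-block set partitions of `[n]` avoiding
`12/3` equals `k`, and it equals `1` when `k = n`. -/
theorem stmt4 (n k : ℕ) :
    (k < n → Nat.card {P : SP n // P.parts.card = k ∧ avoids12_3 P} = k) ∧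
    (k = n → Nat.card {P : SP n // P.parts.card = k ∧ avoids12_3 P} = 1) := by
  refine ⟨fun h => Stmt4Aux.count_lt h, fun h => ?_⟩
  subst h
  exact Stmt4Aux.count_eq
end

section
/- For n ≥ 3, the set partitions of [n] with exactly k blocks avoiding both 13/2 and 12/3 are exactly those whose RGF is 1 2 3 ⋯ k^{n-k+1} (i.e., 123⋯(k-1) followed by n-k+1 copies of k); in particular there is exactly one such partition for each 1 ≤ k ≤ n. -/
open Finset Polynomial

section Aux
variable {n : ℕ}

lemma blockOf_spec (P : SP n) (i : Fin n) : blockOf P i ∈ P.parts ∧ i ∈ blockOf P i := by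
  obtain ⟨B, hB, hiB⟩ := P.exists_mem (Finset.mem_univ i)
  have hf : P.parts.filter (fun C => i ∈ C) = {B} := by
    ext C
    simp only [Finset.mem_filter, Finset.mem_singleton]
    constructor
    · rintro ⟨hC, hiC⟩; exact P.eq_of_mem_parts hC hB hiC hiB
    · rintro rfl; exact ⟨hB, hiB⟩
  rw [blockOf, hf, Finset.sup_singleton, id]
  exact ⟨hB, hiB⟩

lemma blockOf_eq (P : SP n) {B : Finset (Fin n)} (hB : B ∈ P.parts) {i : Fin n}
    (hi : i ∈ B) : blockOf P i = B :=
  P.eq_of_mem_parts (blockOf_spec P i).1 hB (blockOf_spec P i).2 hi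

lemma inSameBlock_iff (P : SP n) (i j : Fin n) :
    inSameBlock P i j ↔ blockOf P i = blockOf P j := by
  constructor
  · rintro ⟨B, hB, hi, hj⟩
    rw [blockOf_eq P hB hi, blockOf_eq P hB hj]
  · intro h
    exact ⟨blockOf P i, (blockOf_spec P i).1, (blockOf_spec P i).2, h ▸ (blockOf_spec P j).2⟩

lemma rank_injOn (P : SP n) {B C : Finset (Fin n)} (hB : B ∈ P.parts) (hC : C ∈ P.parts)
    (h : (P.parts.filter (fun D => D.min ≤ B.min)).card
       = (P.parts.filter (fun D => D.min ≤ C.min)).card) : B = C := by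
  by_contra hne
  -- mins are distinct
  have hmin : ∀ {D E : Finset (Fin n)}, D ∈ P.parts → E ∈ P.parts → D.min = E.min → D = E := by
    intro D E hD hE hDE
    obtain ⟨d, hd⟩ := P.nonempty_of_mem_parts hD
    have hdm : D.min = (D.min' ⟨d, hd⟩ : Fin n) := (Finset.coe_min' _).symm
    have hdD : D.min' ⟨d, hd⟩ ∈ D := Finset.min'_mem _ _
    have hdE : D.min' ⟨d, hd⟩ ∈ E := Finset.mem_of_min (by rw [← hDE]; exact hdm)
    exact P.eq_of_mem_parts hD hE hdD hdE
  have hlt : ∀ {D E : Finset (Fin n)}, D ∈ P.parts → E ∈ P.parts → D.min < E.min →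
      (P.parts.filter (fun F => F.min ≤ D.min)).card
        < (P.parts.filter (fun F => F.min ≤ E.min)).card := by
    intro D E hD hE hDE
    apply Finset.card_lt_card
    constructor
    · intro F hF
      rw [Finset.mem_filter] at hF ⊢
      exact ⟨hF.1, hF.2.trans hDE.le⟩
    · intro hsub
      have : E ∈ P.parts.filter (fun F => F.min ≤ E.min) :=
        Finset.mem_filter.2 ⟨hE, le_rfl⟩
      have := hsub this
      rw [Finset.mem_filter] at this
      exact absurd (lt_of_le_of_lt this.2 hDE) (lt_irrefl _)
  rcases lt_trichotomy B.min C.min with h1 | h1 | h1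
  · exact absurd h (Nat.ne_of_lt (hlt hB hC h1))
  · exact hne (hmin hB hC h1)
  · exact absurd h.symm (Nat.ne_of_lt (hlt hC hB h1))

lemma rgf_eq_iff (P : SP n) (i j : Fin n) : rgf P i = rgf P j ↔ inSameBlock P i j := by
  rw [inSameBlock_iff]
  constructor
  · intro h
    exact rank_injOn P (blockOf_spec P i).1 (blockOf_spec P j).1 h
  · intro h
    rw [rgf, rgf, h]

end Aux

section Canon
variable {n : ℕ}

open Classical in
lemma blockOf_eq_filter (P : SP n) (i : Fin n) :
    blockOf P i = Finset.univ.filter (fun j => inSameBlock P i j) := by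
  ext j
  simp only [Finset.mem_filter, Finset.mem_univ, true_and]
  constructor
  · intro hj
    exact ⟨blockOf P i, (blockOf_spec P i).1, (blockOf_spec P i).2, hj⟩
  · rintro ⟨B, hB, hi, hj⟩
    rw [blockOf_eq P hB hi]; exact hj

lemma parts_eq_image_blockOf (P : SP n) :
    P.parts = Finset.univ.image (blockOf P) := by
  ext B
  simp only [Finset.mem_image, Finset.mem_univ, true_and]
  constructor
  · intro hB
    obtain ⟨b, hb⟩ := P.nonempty_of_mem_parts hB
    exact ⟨b, blockOf_eq P hB hb⟩
  · rintro ⟨b, rfl⟩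
    exact (blockOf_spec P b).1

/-- The tail block `{m, m+1, …, n-1}`. -/
def tailB (n m : ℕ) : Finset (Fin n) := Finset.univ.filter (fun j => m ≤ (j : ℕ))

/-- The parts of the canonical partition: singletons below `m`, plus the tail block. -/
def canonParts (n m : ℕ) : Finset (Finset (Fin n)) :=
  insert (tailB n m)
    ((Finset.univ.filter (fun j : Fin n => (j : ℕ) < m)).image (fun j => {j}))

lemma mem_tailB {m : ℕ} {j : Fin n} : j ∈ tailB n m ↔ m ≤ (j : ℕ) := by
  simp [tailB]

lemma tailB_notMem_image {m : ℕ} :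
    tailB n m ∉ (Finset.univ.filter (fun j : Fin n => (j : ℕ) < m)).image
      (fun j => ({j} : Finset (Fin n))) := by
  rw [Finset.mem_image]
  rintro ⟨j, hj, hje⟩
  rw [Finset.mem_filter] at hj
  have : j ∈ tailB n m := by rw [← hje]; exact Finset.mem_singleton_self j
  rw [mem_tailB] at this
  omega

/-- The canonical partition with singleton blocks below `m` and tail block `{m,…,n-1}`. -/
def canon (n m : ℕ) (hmn : m < n) : SP n where
  parts := canonParts n m
  supIndep := by
    rw [Finset.supIndep_iff_pairwiseDisjoint]
    intro B hB C hC hne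
    simp only [Finset.coe_insert, Set.mem_insert_iff, Finset.coe_image, Set.mem_image,
      Finset.coe_filter, Set.mem_setOf_eq, Finset.mem_univ, true_and,
      canonParts] at hB hC
    simp only [Function.onFun, id]
    rw [Finset.disjoint_left]
    intro x hxB hxC
    rcases hB with rfl | ⟨b, hb, rfl⟩ <;> rcases hC with rfl | ⟨c, hc, rfl⟩
    · exact hne rfl
    · rw [mem_tailB] at hxB
      rw [Finset.mem_singleton] at hxC
      subst hxC; omega
    · rw [mem_tailB] at hxC
      rw [Finset.mem_singleton] at hxB
      subst hxB; omega
    · rw [Finset.mem_singleton] at hxB hxC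
      exact hne (by rw [← hxB, hxC])
  sup_parts := by
    apply Finset.eq_univ_of_forall
    intro x
    rw [Finset.mem_sup]
    by_cases hx : (x : ℕ) < m
    · refine ⟨{x}, ?_, Finset.mem_singleton_self x⟩
      exact Finset.mem_insert_of_mem (Finset.mem_image_of_mem _ (by simp [hx]))
    · exact ⟨tailB n m, Finset.mem_insert_self _ _, mem_tailB.2 (by omega)⟩
  bot_notMem := by
    rw [canonParts, Finset.mem_insert]
    rintro (h | h)
    · have : (⟨m, hmn⟩ : Fin n) ∈ tailB n m := mem_tailB.2 le_rfl
      rw [← h] at this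
      exact absurd this (Finset.notMem_empty _)
    · rw [Finset.mem_image] at h
      obtain ⟨j, _, hje⟩ := h
      have : j ∈ (⊥ : Finset (Fin n)) := hje ▸ Finset.mem_singleton_self j
      exact absurd this (Finset.notMem_empty _)

lemma blockOf_canon {m : ℕ} (hmn : m < n) (i : Fin n) :
    blockOf (canon n m hmn) i = if (i : ℕ) < m then {i} else tailB n m := by
  split_ifs with hi
  · exact blockOf_eq _ (Finset.mem_insert_of_mem (Finset.mem_image_of_mem _ (by simp [hi])))
      (Finset.mem_singleton_self i)
  · exact blockOf_eq _ (Finset.mem_insert_self _ _) (mem_tailB.2 (by omega))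

lemma inSameBlock_canon {m : ℕ} (hmn : m < n) (i j : Fin n) :
    inSameBlock (canon n m hmn) i j ↔ (i = j ∨ (m ≤ (i : ℕ) ∧ m ≤ (j : ℕ))) := by
  rw [inSameBlock_iff, blockOf_canon, blockOf_canon]
  split_ifs with h1 h2 h2
  · rw [Finset.singleton_inj]
    constructor
    · exact Or.inl
    · rintro (h | ⟨h, _⟩)
      · exact h
      · omega
  · constructor
    · intro h
      have : j ∈ ({i} : Finset (Fin n)) := h ▸ mem_tailB.2 (by omega)
      rw [Finset.mem_singleton] at this
      subst this; omega
    · rintro (rfl | ⟨h, _⟩) <;> omega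
  · constructor
    · intro h
      have : i ∈ ({j} : Finset (Fin n)) := h.symm ▸ mem_tailB.2 (by omega)
      rw [Finset.mem_singleton] at this
      subst this; omega
    · rintro (rfl | ⟨_, h⟩) <;> omega
  · simp only [iff_true_intro rfl, true_iff]
    exact Or.inr ⟨by omega, by omega⟩

lemma card_canonParts {m : ℕ} (hmn : m < n) : (canonParts n m).card = m + 1 := by
  rw [canonParts, Finset.card_insert_of_notMem tailB_notMem_image,
    Finset.card_image_of_injective _ Finset.singleton_injective]
  congr 1
  have : Finset.univ.filter (fun j : Fin n => (j : ℕ) < m) = Finset.Iio (⟨m, hmn⟩ : Fin n) := by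
    ext j; simp [Fin.lt_def]
  rw [this, Fin.card_Iio]

lemma min_tailB {m : ℕ} (hmn : m < n) : (tailB n m).min = ((⟨m, hmn⟩ : Fin n) : WithTop (Fin n)) := by
  apply le_antisymm
  · exact Finset.min_le (mem_tailB.2 le_rfl)
  · exact Finset.le_min (fun b hb => by
      rw [mem_tailB] at hb
      exact WithTop.coe_le_coe.2 (by rw [Fin.le_def]; exact hb))

lemma rgf_canon {m : ℕ} (hmn : m < n) (i : Fin n) :
    rgf (canon n m hmn) i = if (i : ℕ) < m then (i : ℕ) + 1 else m + 1 := by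
  have hparts : (canon n m hmn).parts = canonParts n m := rfl
  rw [rgf, blockOf_canon, hparts]
  have himg : ∀ c : Fin n,
      ((Finset.univ.filter (fun j : Fin n => (j : ℕ) < m)).image
        (fun j => ({j} : Finset (Fin n)))).filter (fun B => B.min ≤ (c : WithTop (Fin n)))
      = (Finset.univ.filter (fun j : Fin n => (j : ℕ) < m ∧ j ≤ c)).image
        (fun j => ({j} : Finset (Fin n))) := by
    intro c
    rw [Finset.filter_image]
    congr 1
    ext j
    simp only [Finset.mem_filter, Finset.mem_univ, true_and, Finset.min_singleton,
      WithTop.coe_le_coe, and_congr_right_iff]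
  split_ifs with hi
  · -- block of i is {i}, min is i
    rw [Finset.min_singleton, canonParts, Finset.filter_insert]
    rw [if_neg (by
      rw [min_tailB hmn, WithTop.coe_le_coe, Fin.le_def]
      simp only [not_le]
      exact hi)]
    rw [himg, Finset.card_image_of_injective _ Finset.singleton_injective]
    have : Finset.univ.filter (fun j : Fin n => (j : ℕ) < m ∧ j ≤ i) = Finset.Iic i := by
      ext j
      simp only [Finset.mem_filter, Finset.mem_univ, true_and, Finset.mem_Iic, Fin.le_def]
      omega
    rw [this, Fin.card_Iic]
  · -- block of i is the tail, min is m
    rw [min_tailB hmn, canonParts, Finset.filter_insert]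
    rw [if_pos (le_of_eq (min_tailB hmn))]
    rw [Finset.card_insert_of_notMem (fun h => tailB_notMem_image (Finset.filter_subset _ _ h))]
    rw [himg, Finset.card_image_of_injective _ Finset.singleton_injective]
    have : Finset.univ.filter (fun j : Fin n => (j : ℕ) < m ∧ j ≤ (⟨m, hmn⟩ : Fin n))
        = Finset.Iio (⟨m, hmn⟩ : Fin n) := by
      ext j
      simp only [Finset.mem_filter, Finset.mem_univ, true_and, Finset.mem_Iio, Fin.lt_def,
        Fin.le_def]
      omega
    rw [this, Fin.card_Iio]

end Canon

section Struct
variable {n : ℕ}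

lemma inSameBlock_self (P : SP n) (a : Fin n) : inSameBlock P a a :=
  ⟨blockOf P a, (blockOf_spec P a).1, (blockOf_spec P a).2, (blockOf_spec P a).2⟩

lemma parts_eq_canon {k : ℕ} (hn : 1 ≤ n) (hk1 : 1 ≤ k) (hkn : k ≤ n) (P : SP n)
    (hcard : P.parts.card = k) (h13 : avoids13_2 P) (h12 : avoids12_3 P) :
    P.parts = canonParts n (k - 1) := by
  classical
  set m := k - 1 with hm
  have claimA : ∀ a c : Fin n, a < c → inSameBlock P a c →
      ∀ b : Fin n, a ≤ b → inSameBlock P a b := by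
    intro a c hac hs b hab
    rcases eq_or_lt_of_le hab with rfl | hab'
    · exact inSameBlock_self P a
    rcases lt_trichotomy b c with h1 | rfl | h1
    · by_contra hno
      exact h13 ⟨a, b, c, hab', h1, hs, hno⟩
    · exact hs
    · by_contra hno
      exact h12 ⟨a, c, b, hac, h1, hs, hno⟩
  have hn0 : 0 < n := hn
  set last : Fin n := ⟨n - 1, by omega⟩ with hlastdef
  have hlast : ∀ b : Fin n, b ≤ last := by
    intro b
    rw [Fin.le_def]
    have := b.isLt
    simp only [hlastdef]
    omega
  set T := blockOf P last with hT
  have hT_parts : T ∈ P.parts := (blockOf_spec P last).1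
  have hlastT : last ∈ T := (blockOf_spec P last).2
  have claimC : ∀ a b : Fin n, a < b → inSameBlock P a b → blockOf P a = T := by
    intro a b hab hs
    have h := claimA a b hab hs last (hlast a)
    rw [inSameBlock_iff] at h
    exact h
  have hsingle : ∀ i : Fin n, i ∉ T → blockOf P i = {i} := by
    intro i hiT
    rw [Finset.eq_singleton_iff_unique_mem]
    refine ⟨(blockOf_spec P i).2, ?_⟩
    intro j hj
    by_contra hji
    have hs : inSameBlock P i j := ⟨blockOf P i, (blockOf_spec P i).1, (blockOf_spec P i).2, hj⟩
    rcases lt_trichotomy i j with h1 | h1 | h1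
    · exact hiT (claimC i j h1 hs ▸ (blockOf_spec P i).2)
    · exact hji h1.symm
    · have hs' : inSameBlock P j i := by
        obtain ⟨B, hB, h2, h3⟩ := hs
        exact ⟨B, hB, h3, h2⟩
      have h4 := claimC j i h1 hs'
      have hbij : blockOf P i = T := by
        rw [inSameBlock_iff] at hs
        rw [hs, h4]
      exact hiT (hbij ▸ (blockOf_spec P i).2)
  have hfinal : ∀ a ∈ T, ∀ c : Fin n, a ≤ c → c ∈ T := by
    intro a ha c hac
    rcases eq_or_lt_of_le (hlast a) with h1 | h1
    · have hc : c = last := le_antisymm (hlast c) (h1 ▸ hac)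
      rw [hc]; exact hlastT
    · have hs : inSameBlock P a last := ⟨T, hT_parts, ha, hlastT⟩
      have hac' := claimA a last h1 hs c hac
      rw [inSameBlock_iff] at hac'
      have hba : blockOf P a = T := blockOf_eq P hT_parts ha
      have hbc : blockOf P c = T := by rw [← hac', hba]
      exact hbc ▸ (blockOf_spec P c).2
  set t := T.min' ⟨last, hlastT⟩ with ht
  have htT : t ∈ T := Finset.min'_mem _ _
  have hTeq : T = Finset.Ici t := by
    ext j
    simp only [Finset.mem_Ici]
    exact ⟨fun hj => Finset.min'_le _ _ hj, fun hj => hfinal t htT j hj⟩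
  have hPparts : P.parts = insert T
      ((Finset.univ.filter (fun j : Fin n => j ∉ T)).image fun j => ({j} : Finset (Fin n))) := by
    ext B
    simp only [Finset.mem_insert, Finset.mem_image, Finset.mem_filter, Finset.mem_univ, true_and]
    constructor
    · intro hB
      obtain ⟨b, hb⟩ := P.nonempty_of_mem_parts hB
      have hBb : blockOf P b = B := blockOf_eq P hB hb
      by_cases hbT : b ∈ T
      · left; rw [← hBb, blockOf_eq P hT_parts hbT]
      · right; exact ⟨b, hbT, by rw [← hsingle b hbT, hBb]⟩
    · rintro (rfl | ⟨j, hj, rfl⟩)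
      · exact hT_parts
      · rw [← hsingle j hj]; exact (blockOf_spec P j).1
  have hTnotim : T ∉ (Finset.univ.filter (fun j : Fin n => j ∉ T)).image
      (fun j => ({j} : Finset (Fin n))) := by
    rw [Finset.mem_image]
    rintro ⟨j, hj, hje⟩
    rw [Finset.mem_filter] at hj
    exact hj.2 (hje ▸ Finset.mem_singleton_self j)
  have hfiltereq : Finset.univ.filter (fun j : Fin n => j ∉ T) = Finset.univ \ T := by
    ext j; simp
  have hTcard : T.card = n - (t : ℕ) := by rw [hTeq, Fin.card_Ici]
  have hcard2 : k = (n - T.card) + 1 := by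
    rw [← hcard, hPparts, Finset.card_insert_of_notMem hTnotim,
      Finset.card_image_of_injective _ Finset.singleton_injective, hfiltereq,
      Finset.card_sdiff_of_subset (Finset.subset_univ T), Finset.card_univ, Fintype.card_fin]
  have htlt : (t : ℕ) < n := t.isLt
  have hmt : (t : ℕ) = m := by omega
  rw [hPparts, canonParts]
  congr 1
  · rw [hTeq]
    ext j
    simp only [Finset.mem_Ici, mem_tailB, Fin.le_def, hmt]
  · congr 1
    ext j
    simp only [Finset.mem_filter, Finset.mem_univ, true_and, hTeq, Finset.mem_Ici, Fin.le_def,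
      hmt, not_le]

end Struct

/-- For `n ≥ 3` and `1 ≤ k ≤ n`, the `k`-block set partitions of `[n]`
avoiding both `13/2` and `12/3` are exactly those whose RGF is `1 2 ⋯ (k-1) k^{n-k+1}`;
in particular there is exactly one such partition. -/
theorem stmt8 (n k : ℕ) (hn : 3 ≤ n) (hk1 : 1 ≤ k) (hkn : k ≤ n) :
    (∀ P : SP n, (P.parts.card = k ∧ avoids13_2 P ∧ avoids12_3 P) ↔
      ∀ i : Fin n, rgf P i = if (i : ℕ) < k then (i : ℕ) + 1 else k) ∧
    Nat.card {P : SP n // P.parts.card = k ∧ avoids13_2 P ∧ avoids12_3 P} = 1 := by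
  set m := k - 1 with hm
  have hmn : m < n := by omega
  have hcanon_card : (canon n m hmn).parts.card = k := by
    have h : (canon n m hmn).parts = canonParts n m := rfl
    rw [h, card_canonParts hmn]
    omega
  have hcanon_13 : avoids13_2 (canon n m hmn) := by
    rintro ⟨a, b, c, hab, hbc, hac, hnab⟩
    rw [inSameBlock_canon] at hac hnab
    rw [Fin.lt_def] at hab hbc
    apply hnab
    rcases hac with rfl | ⟨h1, h2⟩
    · exact absurd (hab.trans hbc) (lt_irrefl _)
    · right; exact ⟨h1, by omega⟩
  have hcanon_12 : avoids12_3 (canon n m hmn) := by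
    rintro ⟨a, b, c, hab, hbc, habs, hnac⟩
    rw [inSameBlock_canon] at habs hnac
    rw [Fin.lt_def] at hab hbc
    apply hnac
    rcases habs with rfl | ⟨h1, h2⟩
    · exact absurd hab (lt_irrefl _)
    · right; exact ⟨h1, by omega⟩
  have hchar : ∀ P : SP n, (P.parts.card = k ∧ avoids13_2 P ∧ avoids12_3 P) →
      P = canon n m hmn := by
    rintro P ⟨h1, h2, h3⟩
    exact Finpartition.ext (parts_eq_canon (by omega) hk1 hkn P h1 h2 h3)
  have hrgf_canon : ∀ i : Fin n, rgf (canon n m hmn) i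
      = if (i : ℕ) < k then (i : ℕ) + 1 else k := by
    intro i
    rw [rgf_canon hmn i]
    split_ifs <;> omega
  have hback : ∀ P : SP n, (∀ i : Fin n, rgf P i = if (i : ℕ) < k then (i : ℕ) + 1 else k) →
      P = canon n m hmn := by
    intro P hr
    have hsame : ∀ i j : Fin n,
        inSameBlock P i j ↔ (i = j ∨ (m ≤ (i : ℕ) ∧ m ≤ (j : ℕ))) := by
      intro i j
      rw [← rgf_eq_iff, hr i, hr j, Fin.ext_iff]
      split_ifs <;> omega
    have hblock : ∀ i, blockOf P i = blockOf (canon n m hmn) i := by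
      intro i
      rw [blockOf_eq_filter, blockOf_eq_filter]
      ext j
      simp only [Finset.mem_filter, Finset.mem_univ, true_and]
      rw [hsame, inSameBlock_canon]
    refine Finpartition.ext ?_
    rw [parts_eq_image_blockOf P, parts_eq_image_blockOf (canon n m hmn)]
    exact Finset.image_congr (fun i _ => hblock i)
  constructor
  · intro P
    constructor
    · intro h
      intro i
      rw [hchar P h]
      exact hrgf_canon i
    · intro hr
      rw [hback P hr]
      exact ⟨hcanon_card, hcanon_13, hcanon_12⟩
  · rw [Nat.card_eq_one_iff_unique]
    refine ⟨⟨?_⟩, ⟨⟨canon n m hmn, hcanon_card, hcanon_13, hcanon_12⟩⟩⟩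
    rintro ⟨P, hP⟩ ⟨Q, hQ⟩
    exact Subtype.ext ((hchar P hP).trans (hchar Q hQ).symm)
end

section
/- For n ≥ 3, the set partitions of [n] avoiding both 1/23 and 12/3 with exactly k blocks exist only for k ∈ {1, n-1, n}, with RGFs 1^n, 123⋯(n-1)1, and 123⋯n respectively; in particular there is exactly one such partition for each of these values of k. -/
open Finset Polynomial

namespace Stmt9Aux

open Finpartition

variable {n : ℕ}

lemma inSameBlock_iff_mem_part (P : SP n) (i j : Fin n) :
    inSameBlock P i j ↔ j ∈ P.part i := by
  constructor
  · rintro ⟨B, hB, hi, hj⟩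
    rwa [P.part_eq_of_mem hB hi]
  · intro h
    exact ⟨P.part i, P.part_mem.2 (Finset.mem_univ i), P.mem_part (Finset.mem_univ i), h⟩

lemma R_refl (P : SP n) (i : Fin n) : inSameBlock P i i :=
  ⟨P.part i, P.part_mem.2 (Finset.mem_univ i), P.mem_part (Finset.mem_univ i),
    P.mem_part (Finset.mem_univ i)⟩

lemma R_symm {P : SP n} {i j : Fin n} (h : inSameBlock P i j) : inSameBlock P j i := by
  obtain ⟨B, hB, hi, hj⟩ := h; exact ⟨B, hB, hj, hi⟩

lemma R_trans {P : SP n} {i j k : Fin n} (h1 : inSameBlock P i j) (h2 : inSameBlock P j k) :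
    inSameBlock P i k := by
  obtain ⟨B, hB, hi, hj⟩ := h1
  obtain ⟨C, hC, hj', hk⟩ := h2
  exact ⟨B, hB, hi, (P.eq_of_mem_parts hC hB hj' hj) ▸ hk⟩

lemma blockOf_eq_part (P : SP n) (i : Fin n) : blockOf P i = P.part i := by
  have h : P.parts.filter (fun B => i ∈ B) = {P.part i} := by
    ext B
    simp only [Finset.mem_filter, Finset.mem_singleton]
    constructor
    · rintro ⟨hB, hi⟩; exact (P.part_eq_of_mem hB hi).symm
    · rintro rfl
      exact ⟨P.part_mem.2 (Finset.mem_univ i), P.mem_part (Finset.mem_univ i)⟩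
  rw [blockOf, h, Finset.sup_singleton]; rfl

lemma parts_eq_image (P : SP n) : P.parts = Finset.univ.image P.part := by
  ext B
  simp only [Finset.mem_image, Finset.mem_univ, true_and]
  constructor
  · intro hB
    obtain ⟨x, hx⟩ := P.nonempty_of_mem_parts hB
    exact ⟨x, P.part_eq_of_mem hB hx⟩
  · rintro ⟨x, rfl⟩; exact P.part_mem.2 (Finset.mem_univ x)

lemma eq_of_rel {P Q : SP n} (h : ∀ i j, inSameBlock P i j ↔ inSameBlock Q i j) : P = Q := by
  have hp : ∀ i, P.part i = Q.part i := by
    intro i; ext j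
    rw [← inSameBlock_iff_mem_part, ← inSameBlock_iff_mem_part, h]
  apply Finpartition.ext
  rw [parts_eq_image, parts_eq_image]
  exact Finset.image_congr (fun x _ => hp x)

end Stmt9Aux

namespace Stmt9Aux

def oneSetoid (n : ℕ) : Setoid (Fin n) :=
  ⟨fun _ _ => True, ⟨fun _ => trivial, fun _ => trivial, fun _ _ => trivial⟩⟩

def singSetoid (n : ℕ) : Setoid (Fin n) :=
  ⟨fun i j => i = j, ⟨fun _ => rfl, Eq.symm, Eq.trans⟩⟩

def midSetoid (n : ℕ) : Setoid (Fin n) :=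
  ⟨fun i j => (i : ℕ) = j ∨ ((i : ℕ) = 0 ∧ (j : ℕ) = n - 1) ∨ ((i : ℕ) = n - 1 ∧ (j : ℕ) = 0),
   ⟨fun _ => Or.inl rfl, fun h => by omega, fun h1 h2 => by omega⟩⟩

instance (n : ℕ) : DecidableRel (oneSetoid n).r := fun _ _ => Decidable.isTrue trivial
instance (n : ℕ) : DecidableRel (singSetoid n).r := fun i j =>
  inferInstanceAs (Decidable (i = j))
instance (n : ℕ) : DecidableRel (midSetoid n).r := fun i j =>
  inferInstanceAs (Decidable (_ ∨ _))

def Pone (n : ℕ) : SP n := Finpartition.ofSetoid (oneSetoid n)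
def Psing (n : ℕ) : SP n := Finpartition.ofSetoid (singSetoid n)
def Pmid (n : ℕ) : SP n := Finpartition.ofSetoid (midSetoid n)

lemma rel_Pone (i j : Fin n) : inSameBlock (Pone n) i j := by
  rw [inSameBlock_iff_mem_part, Pone, Finpartition.mem_part_ofSetoid_iff_rel]
  trivial

lemma rel_Psing (i j : Fin n) : inSameBlock (Psing n) i j ↔ i = j := by
  rw [inSameBlock_iff_mem_part, Psing, Finpartition.mem_part_ofSetoid_iff_rel]
  exact Iff.rfl

lemma rel_Pmid (i j : Fin n) : inSameBlock (Pmid n) i j ↔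
    (i : ℕ) = j ∨ ((i : ℕ) = 0 ∧ (j : ℕ) = n - 1) ∨ ((i : ℕ) = n - 1 ∧ (j : ℕ) = 0) := by
  rw [inSameBlock_iff_mem_part, Pmid, Finpartition.mem_part_ofSetoid_iff_rel]
  exact Iff.rfl

end Stmt9Aux

namespace Stmt9Aux

variable {n : ℕ}

def fz (hn : 3 ≤ n) : Fin n := ⟨0, by omega⟩
def fl (hn : 3 ≤ n) : Fin n := ⟨n - 1, by omega⟩

lemma part_Pone (i : Fin n) : (Pone n).part i = Finset.univ := by
  ext j
  rw [Pone, Finpartition.mem_part_ofSetoid_iff_rel]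
  simp [oneSetoid]
  exact trivial

lemma part_Psing (i : Fin n) : (Psing n).part i = {i} := by
  ext j
  rw [Psing, Finpartition.mem_part_ofSetoid_iff_rel]
  simp [singSetoid, eq_comm]
  exact Iff.rfl

lemma part_Pmid (hn : 3 ≤ n) (i : Fin n) :
    (Pmid n).part i =
      if (i : ℕ) = 0 ∨ (i : ℕ) = n - 1 then {fz hn, fl hn} else {i} := by
  ext j
  rw [Pmid, Finpartition.mem_part_ofSetoid_iff_rel]
  show (i : ℕ) = j ∨ _ ↔ _
  split <;> simp only [Finset.mem_insert, Finset.mem_singleton, Fin.ext_iff, fz, fl] <;> omega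

lemma parts_Pone (hn : 3 ≤ n) : (Pone n).parts = {(Finset.univ : Finset (Fin n))} := by
  rw [parts_eq_image]
  ext B
  simp only [Finset.mem_image, Finset.mem_univ, true_and, part_Pone, Finset.mem_singleton]
  exact ⟨fun ⟨x, hx⟩ => hx.symm, fun h => ⟨⟨0, by omega⟩, h.symm⟩⟩

lemma parts_Psing : (Psing n).parts = Finset.univ.image (fun i : Fin n => {i}) := by
  rw [parts_eq_image]
  exact Finset.image_congr (fun x _ => part_Psing x)

lemma parts_Pmid (hn : 3 ≤ n) : (Pmid n).parts =
    insert {fz hn, fl hn} ((Finset.Ioo (fz hn) (fl hn)).image (fun i : Fin n => {i})) := by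
  rw [parts_eq_image]
  ext B
  simp only [Finset.mem_image, Finset.mem_univ, true_and, part_Pmid hn, Finset.mem_insert,
    Finset.mem_Ioo]
  constructor
  · rintro ⟨x, hx⟩
    by_cases hc : (x : ℕ) = 0 ∨ (x : ℕ) = n - 1
    · rw [if_pos hc] at hx; exact Or.inl hx.symm
    · rw [if_neg hc] at hx
      push_neg at hc
      refine Or.inr ⟨x, ⟨?_, ?_⟩, hx⟩
      · simp only [Fin.lt_def, fz]; omega
      · simp only [Fin.lt_def, fl]; omega
  · rintro (rfl | ⟨x, ⟨hx1, hx2⟩, rfl⟩)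
    · refine ⟨fz hn, ?_⟩
      have hz : ((fz hn : Fin n) : ℕ) = 0 := rfl
      rw [if_pos (Or.inl hz)]
    · refine ⟨x, ?_⟩
      rw [if_neg]
      simp only [Fin.lt_def, fz, fl] at hx1 hx2
      push_neg
      exact ⟨by omega, by omega⟩

lemma card_Pone (hn : 3 ≤ n) : (Pone n).parts.card = 1 := by rw [parts_Pone hn]; simp

lemma card_Psing : (Psing n).parts.card = n := by
  rw [parts_Psing, Finset.card_image_of_injective _ (fun a b h => by simpa using h)]
  simp

lemma pair_not_mem (hn : 3 ≤ n) (x : Fin n) : ({fz hn, fl hn} : Finset (Fin n)) ≠ {x} := by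
  intro h
  have h1 : fz hn ∈ ({x} : Finset (Fin n)) := h ▸ Finset.mem_insert_self _ _
  have h2 : fl hn ∈ ({x} : Finset (Fin n)) := h ▸ (by simp)
  simp only [Finset.mem_singleton] at h1 h2
  have h3 := h1.trans h2.symm
  simp only [fz, fl, Fin.ext_iff] at h3
  omega

lemma card_Pmid (hn : 3 ≤ n) : (Pmid n).parts.card = n - 1 := by
  rw [parts_Pmid hn, Finset.card_insert_of_notMem, Finset.card_image_of_injective _
    (fun a b h => by simpa using h), Fin.card_Ioo]
  · show n - 1 - 0 - 1 + 1 = n - 1; omega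
  · simp only [Finset.mem_image, not_exists]
    intro x
    exact fun h => pair_not_mem hn x h.2.symm

end Stmt9Aux

namespace Stmt9Aux

variable {n : ℕ}

lemma rgf_Pone (hn : 3 ≤ n) (i : Fin n) : rgf (Pone n) i = 1 := by
  rw [rgf, blockOf_eq_part, part_Pone, parts_Pone hn, Finset.filter_singleton,
    if_pos le_rfl, Finset.card_singleton]

lemma rgf_Psing (i : Fin n) : rgf (Psing n) i = (i : ℕ) + 1 := by
  rw [rgf, blockOf_eq_part, part_Psing, parts_Psing, Finset.filter_image,
    Finset.card_image_of_injective _ (fun a b h => by simpa using h)]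
  have h : Finset.univ.filter (fun a : Fin n => ({a} : Finset (Fin n)).min ≤
      ({i} : Finset (Fin n)).min) = Finset.Iic i := by
    ext a
    simp [Finset.min_singleton]
  rw [h, Fin.card_Iic]

lemma min_pair (hn : 3 ≤ n) :
    ({fz hn, fl hn} : Finset (Fin n)).min = (fz hn : WithTop (Fin n)) := by
  apply le_antisymm
  · exact Finset.min_le (Finset.mem_insert_self _ _)
  · apply Finset.le_min
    intro a ha
    rw [WithTop.coe_le_coe]
    simp only [Finset.mem_insert, Finset.mem_singleton] at ha
    rcases ha with rfl | rfl
    · exact le_rfl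
    · simp [Fin.le_def, fz, fl]

lemma rgf_Pmid (hn : 3 ≤ n) (i : Fin n) :
    rgf (Pmid n) i = if (i : ℕ) < n - 1 then (i : ℕ) + 1 else 1 := by
  rw [rgf, blockOf_eq_part, part_Pmid hn i, parts_Pmid hn]
  by_cases hc : (i : ℕ) = 0 ∨ (i : ℕ) = n - 1
  · rw [if_pos hc]
    have hr : (if (i : ℕ) < n - 1 then (i : ℕ) + 1 else 1) = 1 := by
      rcases hc with h | h <;> split_ifs <;> omega
    rw [hr]
    have he : (((Finset.Ioo (fz hn) (fl hn)).image (fun i : Fin n => ({i} : Finset (Fin n)))).filter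
        (fun B => B.min ≤ ({fz hn, fl hn} : Finset (Fin n)).min)) = ∅ := by
      rw [Finset.filter_eq_empty_iff]
      intro B hB
      simp only [Finset.mem_image, Finset.mem_Ioo] at hB
      obtain ⟨x, ⟨hx1, _⟩, rfl⟩ := hB
      rw [Finset.min_singleton, min_pair hn, WithTop.coe_le_coe]
      exact not_le.mpr hx1
    rw [Finset.filter_insert, if_pos le_rfl, he]
    simp
  · rw [if_neg hc]
    push_neg at hc
    have hlt := i.isLt
    have hi : (i : ℕ) < n - 1 := by omega
    rw [if_pos hi]
    have hz : ({fz hn, fl hn} : Finset (Fin n)).min ≤ ({i} : Finset (Fin n)).min := by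
      rw [min_pair hn, Finset.min_singleton, WithTop.coe_le_coe]
      simp [Fin.le_def, fz]
    rw [Finset.filter_insert, if_pos hz, Finset.filter_image]
    have h : (Finset.Ioo (fz hn) (fl hn)).filter (fun a : Fin n =>
        ({a} : Finset (Fin n)).min ≤ ({i} : Finset (Fin n)).min) = Finset.Ioc (fz hn) i := by
      ext a
      simp only [Finset.mem_filter, Finset.mem_Ioo, Finset.mem_Ioc, Finset.min_singleton,
        WithTop.coe_le_coe, Fin.lt_def, Fin.le_def, fz, fl]
      omega
    rw [h, Finset.card_insert_of_notMem, Finset.card_image_of_injective _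
      (fun a b h => by simpa using h), Fin.card_Ioc]
    · show (i : ℕ) - (fz hn : ℕ) + 1 = (i : ℕ) + 1
      have : ((fz hn : Fin n) : ℕ) = 0 := rfl
      omega
    · simp only [Finset.mem_image, not_exists]
      intro x
      exact fun h => pair_not_mem hn x h.2.symm

end Stmt9Aux

namespace Stmt9Aux

variable {n : ℕ}

lemma avoids_Pone : avoids1_23 (Pone n) ∧ avoids12_3 (Pone n) := by
  constructor
  · rintro ⟨a, b, c, _, _, _, h⟩; exact h (rel_Pone a b)
  · rintro ⟨a, b, c, _, _, _, h⟩; exact h (rel_Pone a c)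

lemma avoids_Psing : avoids1_23 (Psing n) ∧ avoids12_3 (Psing n) := by
  constructor
  · rintro ⟨a, b, c, _, hbc, h, _⟩
    rw [rel_Psing] at h; exact absurd h hbc.ne
  · rintro ⟨a, b, c, hab, _, h, _⟩
    rw [rel_Psing] at h; exact absurd h hab.ne

lemma avoids_Pmid (hn : 3 ≤ n) : avoids1_23 (Pmid n) ∧ avoids12_3 (Pmid n) := by
  constructor
  · rintro ⟨a, b, c, hab, hbc, h, _⟩
    rw [rel_Pmid] at h
    rw [Fin.lt_def] at hab hbc
    have := c.isLt
    omega
  · rintro ⟨a, b, c, hab, hbc, h, _⟩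
    rw [rel_Pmid] at h
    rw [Fin.lt_def] at hab hbc
    have := c.isLt
    omega

lemma classify (hn : 3 ≤ n) (P : SP n) (h1 : avoids1_23 P) (h2 : avoids12_3 P) :
    P = Pone n ∨ P = Pmid n ∨ P = Psing n := by
  set z : Fin n := fz hn with hz
  set l : Fin n := fl hn with hl
  have hzval : (z : ℕ) = 0 := rfl
  have hlval : (l : ℕ) = n - 1 := rfl
  -- basic consequences of avoidance
  have step12 : ∀ a b c : Fin n, a < b → b < c → inSameBlock P a b → inSameBlock P a c := by
    intro a b c hab hbc hR
    by_contra hc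
    exact h2 ⟨a, b, c, hab, hbc, hR, hc⟩
  have step123 : ∀ a b c : Fin n, a < b → b < c → inSameBlock P b c → inSameBlock P a b := by
    intro a b c hab hbc hR
    by_contra hc
    exact h1 ⟨a, b, c, hab, hbc, hR, hc⟩
  by_cases hs : ∀ i j : Fin n, inSameBlock P i j → i = j
  · right; right
    apply eq_of_rel
    intro i j
    rw [rel_Psing]
    exact ⟨hs i j, fun h => h ▸ R_refl P i⟩
  · -- there is a nontrivially related pair, wlog a < b
    push_neg at hs
    have key : ∃ a b : Fin n, a < b ∧ inSameBlock P a b := by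
      obtain ⟨a, b, hR, hne⟩ := hs
      rcases hne.lt_or_gt with h | h
      · exact ⟨a, b, h, hR⟩
      · exact ⟨b, a, h, R_symm hR⟩
    obtain ⟨a, b, hab, hR⟩ := key
    have hbl : b ≤ l := by
      rw [Fin.le_def, hlval]; have := b.isLt; omega
    have hal : inSameBlock P a l := by
      rcases eq_or_lt_of_le hbl with h | h
      · exact h ▸ hR
      · exact step12 a b l hab h hR
    have haltl : a < l := lt_of_lt_of_le hab hbl
    have hzl : inSameBlock P z l := by
      rcases eq_or_lt_of_le (show z ≤ a by rw [Fin.le_def, hzval]; omega) with h | h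
      · exact h ▸ hal
      · exact R_trans (step123 z a l h haltl hal) hal
    by_cases hm : ∃ m : Fin n, z < m ∧ m < l ∧ inSameBlock P z m
    · -- everything is in one block
      left
      obtain ⟨m, hzm, hml, hRm⟩ := hm
      have hml' : inSameBlock P m l := R_trans (R_symm hRm) hzl
      have hall : ∀ x : Fin n, inSameBlock P z x := by
        intro x
        rcases lt_trichotomy x m with h | h | h
        · rcases eq_or_lt_of_le (show z ≤ x by rw [Fin.le_def, hzval]; omega) with h' | h'
          · exact h' ▸ R_refl P z
          · exact R_trans (step123 x m l h hml hml') (R_symm hRm) |> R_symm |>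
              fun hxm => hxm
        · exact h ▸ hRm
        · exact step12 z m x hzm h hRm
      apply eq_of_rel
      intro i j
      constructor
      · intro _; exact rel_Pone i j
      · intro _; exact R_trans (R_symm (hall i)) (hall j)
    · -- exactly the pair {z, l} plus singletons
      right; left
      push_neg at hm
      -- any nontrivial relation forces the pair (z, l)
      have aux : ∀ i j : Fin n, i < j → inSameBlock P i j → i = z ∧ j = l := by
        intro i j hij hRij
        have hjl : j ≤ l := by rw [Fin.le_def, hlval]; have := j.isLt; omega
        have hiz : i = z := by
          by_contra hne
          have hzi : z < i := by
            rw [Fin.lt_def, hzval]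
            by_contra h
            exact hne (Fin.ext (show (i : ℕ) = (z : ℕ) by omega))
          have hil' : inSameBlock P i l := by
            rcases eq_or_lt_of_le hjl with h | h
            · exact h ▸ hRij
            · exact step12 i j l hij h hRij
          have hzi' : inSameBlock P z i := R_trans hzl (R_symm hil')
          exact hm i hzi (lt_of_lt_of_le hij hjl |> fun _ => lt_of_lt_of_le hij hjl) hzi' |>.elim
        have hjl' : j = l := by
          by_contra hne
          have : j < l := lt_of_le_of_ne hjl hne
          exact hm j (hiz ▸ hij) this (hiz ▸ hRij) |>.elim
        exact ⟨hiz, hjl'⟩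
      apply eq_of_rel
      intro i j
      rw [rel_Pmid]
      constructor
      · intro hRij
        rcases lt_trichotomy i j with h | h | h
        · obtain ⟨rfl, rfl⟩ := aux i j h hRij
          exact Or.inr (Or.inl ⟨hzval, hlval⟩)
        · exact Or.inl (by rw [h])
        · obtain ⟨rfl, rfl⟩ := aux j i h (R_symm hRij)
          exact Or.inr (Or.inr ⟨hlval, hzval⟩)
      · rintro (h | ⟨h1', h2'⟩ | ⟨h1', h2'⟩)
        · exact (Fin.ext h : i = j) ▸ R_refl P i
        · have : i = z := Fin.ext (h1'.trans hzval.symm)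
          have hj : j = l := Fin.ext (h2'.trans hlval.symm)
          rw [this, hj]; exact hzl
        · have : i = l := Fin.ext (h1'.trans hlval.symm)
          have hj : j = z := Fin.ext (h2'.trans hzval.symm)
          rw [this, hj]; exact R_symm hzl

end Stmt9Aux

open Stmt9Aux in
/-- For `n ≥ 3`, the set partitions of `[n]` avoiding both `1/23` and `12/3`
have `k ∈ {1, n-1, n}` blocks, with RGFs `1^n`, `1 2 ⋯ (n-1) 1` and `1 2 ⋯ n`
respectively; and there is exactly one such partition for each of these `k`. -/
theorem stmt9 (n : ℕ) (hn : 3 ≤ n) :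
    (∀ P : SP n, avoids1_23 P → avoids12_3 P →
      (P.parts.card = 1 ∧ ∀ i : Fin n, rgf P i = 1) ∨
      (P.parts.card = n - 1 ∧
        ∀ i : Fin n, rgf P i = if (i : ℕ) < n - 1 then (i : ℕ) + 1 else 1) ∨
      (P.parts.card = n ∧ ∀ i : Fin n, rgf P i = (i : ℕ) + 1)) ∧
    (∀ k ∈ ({1, n - 1, n} : Set ℕ),
      Nat.card {P : SP n // P.parts.card = k ∧ avoids1_23 P ∧ avoids12_3 P} = 1) := by
  constructor
  · intro P h1 h2
    rcases classify hn P h1 h2 with rfl | rfl | rfl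
    · exact Or.inl ⟨card_Pone hn, rgf_Pone hn⟩
    · exact Or.inr (Or.inl ⟨card_Pmid hn, rgf_Pmid hn⟩)
    · exact Or.inr (Or.inr ⟨card_Psing, rgf_Psing⟩)
  · intro k hk
    rw [Nat.card_eq_one_iff_unique]
    refine ⟨⟨?_⟩, ?_⟩
    · rintro ⟨P, hPk, hP1, hP2⟩ ⟨Q, hQk, hQ1, hQ2⟩
      apply Subtype.ext
      show P = Q
      rcases classify hn P hP1 hP2 with rfl | rfl | rfl <;>
        rcases classify hn Q hQ1 hQ2 with rfl | rfl | rfl <;>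
        simp only [card_Pone hn, card_Pmid hn, card_Psing] at hPk hQk <;>
        first
          | rfl
          | (exfalso; omega)
    · simp only [Set.mem_insert_iff, Set.mem_singleton_iff] at hk
      rcases hk with rfl | rfl | rfl
      · exact ⟨⟨Pone n, card_Pone hn, avoids_Pone.1, avoids_Pone.2⟩⟩
      · exact ⟨⟨Pmid n, card_Pmid hn, (avoids_Pmid hn).1, (avoids_Pmid hn).2⟩⟩
      · exact ⟨⟨Psing _, card_Psing, avoids_Psing.1, avoids_Psing.2⟩⟩
end
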